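/- arXiv:1710.05138 — 11 statements merged into one kernel-verified Lean document; each statement's English description precedes it below -/
import Mathlib

section
/- Let Λ be a finite distributive lattice and let A₀ ⊆ A₁, A₂ be finite Λ-ultrametric spaces with A_i = A₀ ∪ {a_i} for i = 1,2 (two-point amalgamation problem). Define d(a₁,a₂) = ⋀_{b ∈ A₀} (d(a₁,b) ⊔ d(a₂,b)). Then the resulting function d on A₀ ∪ {a₁,a₂} satisfies the ultrametric triangle inequality d(x,z) ≤ d(x,y) ⊔ d(y,z) for all points x,y,z. -/
/-- Pre-canonical amalgamation of a two-point amalgamation problem of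
finite `Λ`-ultrametric spaces over a finite distributive lattice `Λ` satisfies the
ultrametric triangle inequality.  The universe is `A₀ ⊕ Bool`, where `Sum.inl b`
ranges over the base `A₀`, `Sum.inr false = a₁` and `Sum.inr true = a₂`. -/
theorem stmt2 {Λ A₀ : Type*} [DistribLattice Λ] [BoundedOrder Λ] [Fintype Λ]
    [Fintype A₀]
    (d : (A₀ ⊕ Bool) → (A₀ ⊕ Bool) → Λ)
    (hsymm : ∀ x y, d x y = d y x)
    (hrefl : ∀ x, d x x = ⊥)
    -- triangle inequality within A₁ = A₀ ∪ {a₁}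
    (htri1 : ∀ x y z : A₀ ⊕ Bool, x ≠ Sum.inr true → y ≠ Sum.inr true →
      z ≠ Sum.inr true → d x z ≤ d x y ⊔ d y z)
    -- triangle inequality within A₂ = A₀ ∪ {a₂}
    (htri2 : ∀ x y z : A₀ ⊕ Bool, x ≠ Sum.inr false → y ≠ Sum.inr false →
      z ≠ Sum.inr false → d x z ≤ d x y ⊔ d y z)
    -- pre-canonical amalgamation: d(a₁,a₂) = ⋀_{b ∈ A₀} (d(a₁,b) ⊔ d(a₂,b))
    (hpc : d (Sum.inr false) (Sum.inr true) =
      (Finset.univ : Finset A₀).inf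
        (fun b => d (Sum.inr false) (Sum.inl b) ⊔ d (Sum.inr true) (Sum.inl b))) :
    ∀ x y z : A₀ ⊕ Bool, d x z ≤ d x y ⊔ d y z := by
  -- a₁ = inr false, a₂ = inr true
  have L1 : ∀ b : A₀, d (Sum.inr false) (Sum.inr true) ≤
      d (Sum.inr false) (Sum.inl b) ⊔ d (Sum.inr true) (Sum.inl b) := by
    intro b
    rw [hpc]
    exact Finset.inf_le (Finset.mem_univ b)
  -- d(a₁,b) ≤ d(a₁,a₂) ⊔ d(a₂,b)
  have L2 : ∀ b : A₀, d (Sum.inr false) (Sum.inl b) ≤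
      d (Sum.inr false) (Sum.inr true) ⊔ d (Sum.inr true) (Sum.inl b) := by
    intro b
    rw [hpc, Finset.inf_sup_distrib_right]
    refine Finset.le_inf fun c _ => ?_
    calc d (Sum.inr false) (Sum.inl b)
        ≤ d (Sum.inr false) (Sum.inl c) ⊔ d (Sum.inl c) (Sum.inl b) :=
          htri1 _ _ _ (by simp) (by simp) (by simp)
      _ ≤ d (Sum.inr false) (Sum.inl c) ⊔
            (d (Sum.inl c) (Sum.inr true) ⊔ d (Sum.inr true) (Sum.inl b)) :=
          sup_le_sup_left (htri2 _ _ _ (by simp) (by simp) (by simp)) _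
      _ = d (Sum.inr false) (Sum.inl c) ⊔ d (Sum.inr true) (Sum.inl c) ⊔
            d (Sum.inr true) (Sum.inl b) := by rw [hsymm (Sum.inl c), sup_assoc]
  -- d(a₂,b) ≤ d(a₂,a₁) ⊔ d(a₁,b)
  have L3 : ∀ b : A₀, d (Sum.inr true) (Sum.inl b) ≤
      d (Sum.inr true) (Sum.inr false) ⊔ d (Sum.inr false) (Sum.inl b) := by
    intro b
    rw [hsymm (Sum.inr true) (Sum.inr false), hpc, Finset.inf_sup_distrib_right]
    refine Finset.le_inf fun c _ => ?_
    calc d (Sum.inr true) (Sum.inl b)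
        ≤ d (Sum.inr true) (Sum.inl c) ⊔ d (Sum.inl c) (Sum.inl b) :=
          htri2 _ _ _ (by simp) (by simp) (by simp)
      _ ≤ d (Sum.inr true) (Sum.inl c) ⊔
            (d (Sum.inl c) (Sum.inr false) ⊔ d (Sum.inr false) (Sum.inl b)) :=
          sup_le_sup_left (htri1 _ _ _ (by simp) (by simp) (by simp)) _
      _ ≤ (d (Sum.inr false) (Sum.inl c) ⊔ d (Sum.inr true) (Sum.inl c)) ⊔
            d (Sum.inr false) (Sum.inl b) := by
          rw [hsymm (Sum.inl c) (Sum.inr false)]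
          rw [← sup_assoc]
          exact sup_le_sup_right (by rw [sup_comm]) _
  intro x y z
  rcases x with a | bx <;> rcases y with b | by' <;> rcases z with c | bz
  · exact htri1 _ _ _ (by simp) (by simp) (by simp)
  · cases bz
    · exact htri1 _ _ _ (by simp) (by simp) (by simp)
    · exact htri2 _ _ _ (by simp) (by simp) (by simp)
  · cases by'
    · exact htri1 _ _ _ (by simp) (by simp) (by simp)
    · exact htri2 _ _ _ (by simp) (by simp) (by simp)
  · cases by' <;> cases bz
    · exact htri1 _ _ _ (by simp) (by simp) (by simp)
    · -- (b, a₁, a₂): d b a₂ ≤ d b a₁ ⊔ d a₁ a₂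
      rw [hsymm (Sum.inl a) (Sum.inr true), hsymm (Sum.inl a) (Sum.inr false)]
      calc d (Sum.inr true) (Sum.inl a)
          ≤ d (Sum.inr true) (Sum.inr false) ⊔ d (Sum.inr false) (Sum.inl a) := L3 a
        _ = d (Sum.inr false) (Sum.inl a) ⊔ d (Sum.inr false) (Sum.inr true) := by
            rw [hsymm (Sum.inr true), sup_comm]
    · -- (b, a₂, a₁): d b a₁ ≤ d b a₂ ⊔ d a₂ a₁
      rw [hsymm (Sum.inl a) (Sum.inr false), hsymm (Sum.inl a) (Sum.inr true)]
      calc d (Sum.inr false) (Sum.inl a)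
          ≤ d (Sum.inr false) (Sum.inr true) ⊔ d (Sum.inr true) (Sum.inl a) := L2 a
        _ = d (Sum.inr true) (Sum.inl a) ⊔ d (Sum.inr true) (Sum.inr false) := by
            rw [hsymm (Sum.inr false) (Sum.inr true), sup_comm]
    · exact htri2 _ _ _ (by simp) (by simp) (by simp)
  · cases bx
    · exact htri1 _ _ _ (by simp) (by simp) (by simp)
    · exact htri2 _ _ _ (by simp) (by simp) (by simp)
  · cases bx <;> cases bz
    · exact htri1 _ _ _ (by simp) (by simp) (by simp)
    · -- (a₁, b, a₂)
      exact (L1 b).trans (by rw [hsymm (Sum.inr true) (Sum.inl b)])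
    · -- (a₂, b, a₁)
      rw [hsymm (Sum.inr true) (Sum.inr false)]
      refine (L1 b).trans ?_
      rw [hsymm (Sum.inr false) (Sum.inl b), sup_comm,
        hsymm (Sum.inl b) (Sum.inr false)]
    · exact htri2 _ _ _ (by simp) (by simp) (by simp)
  · cases bx <;> cases by'
    · exact htri1 _ _ _ (by simp) (by simp) (by simp)
    · -- (a₁, a₂, b)
      exact (L2 c).trans le_rfl
    · -- (a₂, a₁, b)
      exact (L3 c).trans le_rfl
    · exact htri2 _ _ _ (by simp) (by simp) (by simp)
  · cases bx <;> cases by' <;> cases bz <;>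
      simp only [hrefl, bot_sup_eq, sup_bot_eq, bot_le, le_refl, le_sup_left, le_sup_right]
end

section
/- Let Λ be a finite distributive lattice and E ∈ Λ meet-irreducible. If A₀ is a finite Λ-ultrametric space, a₁, a₂ are two extension points with d(a_i, b) given for b ∈ A₀, and the pre-canonical amalgamation value d(a₁,a₂) = ⋀_{b ∈ A₀}(d(a₁,b) ⊔ d(a₂,b)) satisfies d(a₁,a₂) ≤ E, then there exists b ∈ A₀ with d(a₁,b) ≤ E and d(a₂,b) ≤ E. -/
lemma inf_irred {Λ : Type*} [DistribLattice Λ] {ι : Type*} (E : Λ)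
    (hirr : ∀ x y : Λ, E = x ⊓ y → E = x ∨ E = y) (s : Finset ι) (hs : s.Nonempty)
    [OrderTop Λ] (g : ι → Λ) (h : E = s.inf g) : ∃ b ∈ s, E = g b := by
  induction s using Finset.cons_induction with
  | empty => exact absurd hs (by simp)
  | cons a s ha ih =>
    rw [Finset.inf_cons] at h
    rcases hirr _ _ h with h' | h'
    · exact ⟨a, Finset.mem_cons_self a s, h'⟩
    · rcases s.eq_empty_or_nonempty with he | hne
      · subst he
        simp only [Finset.inf_empty, inf_top_eq] at h
        exact ⟨a, Finset.mem_cons_self a ∅, h⟩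
      · obtain ⟨b, hb, hb'⟩ := ih hne h'
        exact ⟨b, Finset.mem_cons_of_mem hb, hb'⟩

/-- If `E` is meet-irreducible in a finite distributive lattice `Λ` and
the pre-canonical amalgamation value `⋀_{b ∈ A₀} (d(a₁,b) ⊔ d(a₂,b))` is `≤ E`,
then some base point `b` satisfies `d(a₁,b) ≤ E` and `d(a₂,b) ≤ E`.
Here `d₁ b = d(a₁,b)` and `d₂ b = d(a₂,b)`. -/
theorem stmt3 {Λ A₀ : Type*} [DistribLattice Λ] [BoundedOrder Λ] [Fintype Λ]
    [Fintype A₀] [Nonempty A₀]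
    (E : Λ) (hirr : ∀ x y : Λ, E = x ⊓ y → E = x ∨ E = y)
    (d₁ d₂ : A₀ → Λ)
    (h : (Finset.univ : Finset A₀).inf (fun b => d₁ b ⊔ d₂ b) ≤ E) :
    ∃ b : A₀, d₁ b ≤ E ∧ d₂ b ≤ E := by
  have key : E = (Finset.univ : Finset A₀).inf (fun b => E ⊔ (d₁ b ⊔ d₂ b)) := by
    rw [← Finset.inf_sup_distrib_left]
    exact (sup_eq_left.mpr h).symm
  obtain ⟨b, _, hb⟩ := inf_irred E hirr Finset.univ Finset.univ_nonempty _ key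
  have : d₁ b ⊔ d₂ b ≤ E := by rw [hb]; exact le_sup_right
  exact ⟨b, le_trans le_sup_left this, le_trans le_sup_right this⟩
end

section
/- Let Γ be a structure with three linear orders <₁, <₂, <₃ such that the relation p₀(x,y) given by (x <₁ y ∧ x <₂ y ∧ x <₃ y) and the relations p_i(x,y) given by (y <_i x and x <_j y for the other two indices j) are all realized, and such that Γ contains every finite structure in which all three relations are linear orders (i.e. Γ is the generic 3-dimensional permutation structure). Then any definable linear order < on Γ that is a union of 2-types must equal <_i or the reverse of <_i for some i ∈ {1,2,3}. Specifically: if < contains the 2-type x <₁ y ∧ x <₂ y ∧ x <₃ y and for each i contains some 2-type implying y <_i x, then < fails transitivity on some finite configuration realizable in Γ. -/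
private lemma sto_pull {n : ℕ} (f : Fin n → Fin n) (hf : Function.Injective f) :
    IsStrictTotalOrder (Fin n) (fun a b => f a < f b) where
  trichotomous a b := by
    intro h1 h2
    exact hf (le_antisymm (not_lt.1 h2) (not_lt.1 h1))
  irrefl a := lt_irrefl (f a)
  trans a b c hab hbc := lt_trans hab hbc

/-- In the generic 3-dimensional permutation structure `Γ` (with
strict linear orders `o 0, o 1, o 2`, embedding every finite structure of three
linear orders), any definable linear order `lt` that is a union of 2-types (i.e.
invariant: whether `lt x y` holds depends only on the quantifier-free 2-type of
`(x,y)`) equals some `o i` or its reversal. -/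
theorem stmt5 {Γ : Type*} (o : Fin 3 → Γ → Γ → Prop)
    (ho : ∀ i, IsStrictTotalOrder Γ (o i))
    (hgen : ∀ (A : Type) (_ : Fintype A) (r : Fin 3 → A → A → Prop),
      (∀ i, IsStrictTotalOrder A (r i)) →
      ∃ e : A → Γ, Function.Injective e ∧ ∀ i a b, r i a b ↔ o i (e a) (e b))
    (lt : Γ → Γ → Prop) (hlt : IsStrictTotalOrder Γ lt)
    (hinv : ∀ x y x' y' : Γ, x ≠ y → x' ≠ y' →
      (∀ i, o i x y ↔ o i x' y') → (lt x y ↔ lt x' y')) :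
    ∃ i, (∀ x y, lt x y ↔ o i x y) ∨ (∀ x y, lt x y ↔ o i y x) := by
  classical
  have oasym : ∀ (i : Fin 3) (x y : Γ), o i x y → ¬ o i y x := fun i x y h h' =>
    (ho i).irrefl x ((ho i).trans x y x h h')
  have onot : ∀ (i : Fin 3) (x y : Γ), x ≠ y → (¬ o i x y ↔ o i y x) := by
    intro i x y hxy
    constructor
    · intro h
      rcases (Classical.byCases (fun h1 : o i x y => Or.inl h1) fun h1 => Classical.byCases (fun h2 : o i y x => Or.inr (Or.inr h2)) fun h2 => Or.inr (Or.inl ((ho i).trichotomous x y h1 h2)) : o i x y ∨ x = y ∨ o i y x) with h' | h' | h'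
      · exact absurd h' h
      · exact absurd h' hxy
      · exact h'
    · exact fun h' h => oasym i x y h h'
  have ltnot : ∀ (x y : Γ), x ≠ y → (¬ lt x y ↔ lt y x) := by
    intro x y hxy
    constructor
    · intro h
      rcases (Classical.byCases (fun h1 : lt x y => Or.inl h1) fun h1 => Classical.byCases (fun h2 : lt y x => Or.inr (Or.inr h2)) fun h2 => Or.inr (Or.inl (hlt.trichotomous x y h1 h2)) : lt x y ∨ x = y ∨ lt y x) with h' | h' | h'
      · exact absurd h' h
      · exact absurd h' hxy
      · exact h'
    · exact fun h' h => hlt.irrefl x (hlt.trans x y x h h')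
  have conf : ∀ (n : ℕ) (σ : Fin 3 → Fin n → Fin n), (∀ i, Function.Injective (σ i)) →
      ∃ e : Fin n → Γ, Function.Injective e ∧ ∀ i a b, (σ i a < σ i b ↔ o i (e a) (e b)) :=
    fun n σ hσ => hgen (Fin n) inferInstance (fun i a b => σ i a < σ i b)
      (fun i => sto_pull (σ i) (hσ i))
  have realize2 : ∀ t : Fin 3 → Bool, ∃ p : Γ × Γ, p.1 ≠ p.2 ∧
      ∀ i, (o i p.1 p.2 ↔ t i = true) := by
    intro t
    obtain ⟨e, he, hr⟩ := conf 2 (fun i => if t i then ![0, 1] else ![1, 0]) (by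
      intro i
      cases h : t i <;> simp [h] <;> decide)
    refine ⟨(e 0, e 1), fun h => absurd (he h) (by decide), fun i => ?_⟩
    rw [← hr i 0 1]
    cases h : t i <;> simp [h]
  choose w hw1 hw2 using realize2
  set L : (Fin 3 → Bool) → Prop := fun t => lt (w t).1 (w t).2 with hLdef
  have key : ∀ (t : Fin 3 → Bool) (x y : Γ), x ≠ y → (∀ i, o i x y ↔ t i = true) →
      (lt x y ↔ L t) := fun t x y hxy ht =>
    hinv x y (w t).1 (w t).2 hxy (hw1 t) (fun i => (ht i).trans (hw2 t i).symm)
  have compl2 : ∀ t s : Fin 3 → Bool, (∀ i, s i = !(t i)) → (L s ↔ ¬ L t) := by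
    intro t s hs
    have h1 : lt (w t).2 (w t).1 ↔ L s := by
      refine key s (w t).2 (w t).1 (Ne.symm (hw1 t)) fun i => ?_
      have e1 : o i (w t).2 (w t).1 ↔ ¬ o i (w t).1 (w t).2 :=
        (onot i (w t).1 (w t).2 (hw1 t)).symm
      rw [e1, hw2 t i, hs i]
      cases t i <;> simp
    exact h1.symm.trans ((ltnot (w t).1 (w t).2 (hw1 t)).symm)
  have main : ∀ j : Fin 3, (∀ t : Fin 3 → Bool, L t ↔ t j = true) →
      ∀ x y, lt x y ↔ o j x y := by
    intro j hj x y
    by_cases hxy : x = y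
    · subst hxy
      exact iff_of_false (hlt.irrefl x) ((ho j).irrefl x)
    · rw [key (fun i => decide (o i x y)) x y hxy (fun i => (decide_eq_true_iff).symm), hj]
      exact decide_eq_true_iff
  have mainr : ∀ j : Fin 3, (∀ t : Fin 3 → Bool, L t ↔ t j = false) →
      ∀ x y, lt x y ↔ o j y x := by
    intro j hj x y
    by_cases hxy : x = y
    · subst hxy
      exact iff_of_false (hlt.irrefl x) ((ho j).irrefl x)
    · rw [key (fun i => decide (o i x y)) x y hxy (fun i => (decide_eq_true_iff).symm), hj,
        decide_eq_false_iff_not]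
      exact onot j x y hxy
  have chain3 : ∀ (σ : Fin 3 → Fin 3 → Fin 3) (t01 t12 t02 : Fin 3 → Bool),
      (∀ i, Function.Injective (σ i)) →
      (∀ i, (σ i 0 < σ i 1 ↔ t01 i = true)) →
      (∀ i, (σ i 1 < σ i 2 ↔ t12 i = true)) →
      (∀ i, (σ i 0 < σ i 2 ↔ t02 i = true)) →
      L t01 → L t12 → ¬ L t02 → False := by
    intro σ t01 t12 t02 hσ h01 h12 h02 H01 H12 H02
    obtain ⟨e, he, hr⟩ := conf 3 σ hσ
    have ne : ∀ a b : Fin 3, a ≠ b → e a ≠ e b := fun a b hab h => hab (he h)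
    have k01 : lt (e 0) (e 1) :=
      (key t01 _ _ (ne 0 1 (by decide)) fun i => (hr i 0 1).symm.trans (h01 i)).mpr H01
    have k12 : lt (e 1) (e 2) :=
      (key t12 _ _ (ne 1 2 (by decide)) fun i => (hr i 1 2).symm.trans (h12 i)).mpr H12
    exact H02 ((key t02 _ _ (ne 0 2 (by decide)) fun i =>
      (hr i 0 2).symm.trans (h02 i)).mp (hlt.trans _ _ _ k01 k12))
  have chain4 : ∀ (σ : Fin 3 → Fin 4 → Fin 4) (t01 t12 t23 t03 : Fin 3 → Bool),
      (∀ i, Function.Injective (σ i)) →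
      (∀ i, (σ i 0 < σ i 1 ↔ t01 i = true)) →
      (∀ i, (σ i 1 < σ i 2 ↔ t12 i = true)) →
      (∀ i, (σ i 2 < σ i 3 ↔ t23 i = true)) →
      (∀ i, (σ i 0 < σ i 3 ↔ t03 i = true)) →
      L t01 → L t12 → L t23 → ¬ L t03 → False := by
    intro σ t01 t12 t23 t03 hσ h01 h12 h23 h03 H01 H12 H23 H03
    obtain ⟨e, he, hr⟩ := conf 4 σ hσ
    have ne : ∀ a b : Fin 4, a ≠ b → e a ≠ e b := fun a b hab h => hab (he h)
    have k01 : lt (e 0) (e 1) :=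
      (key t01 _ _ (ne 0 1 (by decide)) fun i => (hr i 0 1).symm.trans (h01 i)).mpr H01
    have k12 : lt (e 1) (e 2) :=
      (key t12 _ _ (ne 1 2 (by decide)) fun i => (hr i 1 2).symm.trans (h12 i)).mpr H12
    have k23 : lt (e 2) (e 3) :=
      (key t23 _ _ (ne 2 3 (by decide)) fun i => (hr i 2 3).symm.trans (h23 i)).mpr H23
    exact H03 ((key t03 _ _ (ne 0 3 (by decide)) fun i =>
      (hr i 0 3).symm.trans (h03 i)).mp
      (hlt.trans _ _ _ (hlt.trans _ _ _ k01 k12) k23))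
  have eta : ∀ t : Fin 3 → Bool, L t ↔ L ![t 0, t 1, t 2] := fun t =>
    iff_of_eq (congrArg L (funext fun i => by fin_cases i <;> rfl))
  by_cases hp : L ![true, true, true]
  · have hp' : ¬ L ![false, false, false] := fun h =>
      ((compl2 ![true, true, true] ![false, false, false] (by decide)).mp h) hp
    by_cases ha : L ![false, true, true]
    · by_cases hb : L ![true, false, true]
      · by_cases hc : L ![true, true, false]
        · -- all true: 4-cycle contradiction
          exact (chain4 ![![3,0,1,2], ![2,3,0,1], ![1,2,3,0]]
            ![false,true,true] ![true,false,true] ![true,true,false] ![false,false,false]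
            (by decide) (by decide) (by decide) (by decide) (by decide)
            ha hb hc hp').elim
        · -- lt = o 2
          have c1 : ¬ L ![true, false, false] := fun h =>
            ((compl2 ![false, true, true] ![true, false, false] (by decide)).mp h) ha
          have c2 : ¬ L ![false, true, false] := fun h =>
            ((compl2 ![true, false, true] ![false, true, false] (by decide)).mp h) hb
          have c3 : L ![false, false, true] :=
            (compl2 ![true, true, false] ![false, false, true] (by decide)).mpr hc
          refine ⟨2, Or.inl (main 2 ?_)⟩
          intro t
          rw [eta t]
          rcases Bool.dichotomy (t 0) with h0 | h0 <;>
            rcases Bool.dichotomy (t 1) with h1 | h1 <;>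
              rcases Bool.dichotomy (t 2) with h2 | h2 <;>
                rw [h0, h1, h2] <;> simp [hp, ha, hb, hc, hp', c1, c2, c3]
      · by_cases hc : L ![true, true, false]
        · -- lt = o 1
          have c1 : ¬ L ![true, false, false] := fun h =>
            ((compl2 ![false, true, true] ![true, false, false] (by decide)).mp h) ha
          have c2 : L ![false, true, false] :=
            (compl2 ![true, false, true] ![false, true, false] (by decide)).mpr hb
          have c3 : ¬ L ![false, false, true] := fun h =>
            ((compl2 ![true, true, false] ![false, false, true] (by decide)).mp h) hc
          refine ⟨1, Or.inl (main 1 ?_)⟩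
          intro t
          rw [eta t]
          rcases Bool.dichotomy (t 0) with h0 | h0 <;>
            rcases Bool.dichotomy (t 1) with h1 | h1 <;>
              rcases Bool.dichotomy (t 2) with h2 | h2 <;>
                rw [h0, h1, h2] <;> simp [hp, ha, hb, hc, hp', c1, c2, c3]
        · -- ¬b, ¬c: 3-chain FTF, FFT → FFF
          have c2 : L ![false, true, false] :=
            (compl2 ![true, false, true] ![false, true, false] (by decide)).mpr hb
          have c3 : L ![false, false, true] :=
            (compl2 ![true, true, false] ![false, false, true] (by decide)).mpr hc
          exact (chain3 ![![2,1,0], ![1,2,0], ![2,0,1]]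
            ![false,true,false] ![false,false,true] ![false,false,false]
            (by decide) (by decide) (by decide) (by decide) c2 c3 hp').elim
    · by_cases hb : L ![true, false, true]
      · by_cases hc : L ![true, true, false]
        · -- lt = o 0
          have c1 : L ![true, false, false] :=
            (compl2 ![false, true, true] ![true, false, false] (by decide)).mpr ha
          have c2 : ¬ L ![false, true, false] := fun h =>
            ((compl2 ![true, false, true] ![false, true, false] (by decide)).mp h) hb
          have c3 : ¬ L ![false, false, true] := fun h =>
            ((compl2 ![true, true, false] ![false, false, true] (by decide)).mp h) hc
          refine ⟨0, Or.inl (main 0 ?_)⟩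
          intro t
          rw [eta t]
          rcases Bool.dichotomy (t 0) with h0 | h0 <;>
            rcases Bool.dichotomy (t 1) with h1 | h1 <;>
              rcases Bool.dichotomy (t 2) with h2 | h2 <;>
                rw [h0, h1, h2] <;> simp [hp, ha, hb, hc, hp', c1, c2, c3]
        · -- ¬a, ¬c: 3-chain TFF, FFT → FFF
          have c1 : L ![true, false, false] :=
            (compl2 ![false, true, true] ![true, false, false] (by decide)).mpr ha
          have c3 : L ![false, false, true] :=
            (compl2 ![true, true, false] ![false, false, true] (by decide)).mpr hc
          exact (chain3 ![![1,2,0], ![2,1,0], ![2,0,1]]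
            ![true,false,false] ![false,false,true] ![false,false,false]
            (by decide) (by decide) (by decide) (by decide) c1 c3 hp').elim
      · -- ¬a, ¬b: 3-chain TFF, FTF → FFF
        have c1 : L ![true, false, false] :=
          (compl2 ![false, true, true] ![true, false, false] (by decide)).mpr ha
        have c2 : L ![false, true, false] :=
          (compl2 ![true, false, true] ![false, true, false] (by decide)).mpr hb
        exact (chain3 ![![1,2,0], ![2,0,1], ![2,1,0]]
          ![true,false,false] ![false,true,false] ![false,false,false]
          (by decide) (by decide) (by decide) (by decide) c1 c2 hp').elim
  · have hp' : L ![false, false, false] :=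
      (compl2 ![true, true, true] ![false, false, false] (by decide)).mpr hp
    by_cases ha : L ![false, true, true]
    · by_cases hb : L ![true, false, true]
      · -- a, b: 3-chain FTT, TFT → TTT
        exact (chain3 ![![1,0,2], ![0,2,1], ![0,1,2]]
          ![false,true,true] ![true,false,true] ![true,true,true]
          (by decide) (by decide) (by decide) (by decide) ha hb hp).elim
      · by_cases hc : L ![true, true, false]
        · -- a, c: 3-chain FTT, TTF → TTT
          exact (chain3 ![![1,0,2], ![0,1,2], ![0,2,1]]
            ![false,true,true] ![true,true,false] ![true,true,true]
            (by decide) (by decide) (by decide) (by decide) ha hc hp).elim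
        · -- lt = reverse of o 0
          have c1 : ¬ L ![true, false, false] := fun h =>
            ((compl2 ![false, true, true] ![true, false, false] (by decide)).mp h) ha
          have c2 : L ![false, true, false] :=
            (compl2 ![true, false, true] ![false, true, false] (by decide)).mpr hb
          have c3 : L ![false, false, true] :=
            (compl2 ![true, true, false] ![false, false, true] (by decide)).mpr hc
          refine ⟨0, Or.inr (mainr 0 ?_)⟩
          intro t
          rw [eta t]
          rcases Bool.dichotomy (t 0) with h0 | h0 <;>
            rcases Bool.dichotomy (t 1) with h1 | h1 <;>
              rcases Bool.dichotomy (t 2) with h2 | h2 <;>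
                rw [h0, h1, h2] <;> simp [hp, ha, hb, hc, hp', c1, c2, c3]
    · by_cases hb : L ![true, false, true]
      · by_cases hc : L ![true, true, false]
        · -- b, c: 3-chain TFT, TTF → TTT
          exact (chain3 ![![0,1,2], ![1,0,2], ![0,2,1]]
            ![true,false,true] ![true,true,false] ![true,true,true]
            (by decide) (by decide) (by decide) (by decide) hb hc hp).elim
        · -- lt = reverse of o 1
          have c1 : L ![true, false, false] :=
            (compl2 ![false, true, true] ![true, false, false] (by decide)).mpr ha
          have c2 : ¬ L ![false, true, false] := fun h =>
            ((compl2 ![true, false, true] ![false, true, false] (by decide)).mp h) hb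
          have c3 : L ![false, false, true] :=
            (compl2 ![true, true, false] ![false, false, true] (by decide)).mpr hc
          refine ⟨1, Or.inr (mainr 1 ?_)⟩
          intro t
          rw [eta t]
          rcases Bool.dichotomy (t 0) with h0 | h0 <;>
            rcases Bool.dichotomy (t 1) with h1 | h1 <;>
              rcases Bool.dichotomy (t 2) with h2 | h2 <;>
                rw [h0, h1, h2] <;> simp [hp, ha, hb, hc, hp', c1, c2, c3]
      · by_cases hc : L ![true, true, false]
        · -- lt = reverse of o 2
          have c1 : L ![true, false, false] :=
            (compl2 ![false, true, true] ![true, false, false] (by decide)).mpr ha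
          have c2 : L ![false, true, false] :=
            (compl2 ![true, false, true] ![false, true, false] (by decide)).mpr hb
          have c3 : ¬ L ![false, false, true] := fun h =>
            ((compl2 ![true, true, false] ![false, false, true] (by decide)).mp h) hc
          refine ⟨2, Or.inr (mainr 2 ?_)⟩
          intro t
          rw [eta t]
          rcases Bool.dichotomy (t 0) with h0 | h0 <;>
            rcases Bool.dichotomy (t 1) with h1 | h1 <;>
              rcases Bool.dichotomy (t 2) with h2 | h2 <;>
                rw [h0, h1, h2] <;> simp [hp, ha, hb, hc, hp', c1, c2, c3]
        · -- all false: 4-cycle TFF, FTF, FFT → TTT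
          have c1 : L ![true, false, false] :=
            (compl2 ![false, true, true] ![true, false, false] (by decide)).mpr ha
          have c2 : L ![false, true, false] :=
            (compl2 ![true, false, true] ![false, true, false] (by decide)).mpr hb
          have c3 : L ![false, false, true] :=
            (compl2 ![true, true, false] ![false, false, true] (by decide)).mpr hc
          exact (chain4 ![![0,3,2,1], ![1,0,3,2], ![2,1,0,3]]
            ![true,false,false] ![false,true,false] ![false,false,true] ![true,true,true]
            (by decide) (by decide) (by decide) (by decide) (by decide)
            c1 c2 c3 hp).elim
end

section
/- Fix n and ℓ = ⌊n/2⌋, and suppose n!/(n−ℓ)! > 2^ℓ · k. Consider a set A of n points each carrying k linear orders. A pairing is a set of ℓ disjoint unordered pairs of points of A; a pairing is separated if for every i ≤ k there is a pair whose two points are not adjacent in the order <_i (restricted to A). Then A admits at least one separated pairing. -/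
open Finset


lemma exists_rank_equiv {n : ℕ} (r : Fin n → Fin n → Prop) (hr : IsStrictTotalOrder (Fin n) r) :
    ∃ e : Fin n ≃ Fin n, ∀ a b, r a b ↔ e a < e b := by
  classical
  letI := hr
  let L : LinearOrder (Fin n) := @linearOrderOfSTO _ r hr (fun _ _ => Classical.dec _)
  let E : @OrderIso (Fin n) (Fin n) instLEFin L.toLE := @monoEquivOfFin (Fin n) _ L n (by simp)
  refine ⟨⟨fun a => E.toEquiv.symm a, fun a => E.toEquiv a, fun a => by simp, fun a => by simp⟩,
    fun a b => ?_⟩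
  have h2 := @OrderIso.lt_iff_lt (Fin n) (Fin n) L.toPreorder _
    (@OrderIso.symm (Fin n) (Fin n) instLEFin L.toLE E) a b
  exact Iff.symm h2


lemma rank_lt_iff {N : ℕ} {q : Fin N → ℕ} (hinj : Function.Injective q) (a b : Fin N) :
    (univ.filter fun t => q t < q a).card < (univ.filter fun t => q t < q b).card ↔ q a < q b := by
  constructor
  · intro h
    by_contra hab
    push_neg at hab
    have hsub : (univ.filter fun t => q t < q b) ⊆ (univ.filter fun t => q t < q a) := by
      intro t ht
      rw [mem_filter] at ht ⊢
      exact ⟨ht.1, lt_of_lt_of_le ht.2 hab⟩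
    exact absurd (Finset.card_le_card hsub) (by omega)
  · intro h
    have hsub : insert a (univ.filter fun t => q t < q a) ⊆ univ.filter fun t => q t < q b := by
      intro t ht
      rcases Finset.mem_insert.1 ht with rfl | ht
      · simp [h]
      · rw [mem_filter] at ht ⊢
        exact ⟨ht.1, lt_trans ht.2 h⟩
    have hna : a ∉ univ.filter fun t => q t < q a := by simp
    calc (univ.filter fun t => q t < q a).card
        < (insert a (univ.filter fun t => q t < q a)).card := by
          rw [Finset.card_insert_of_notMem hna]; omega
      _ ≤ _ := Finset.card_le_card hsub

lemma rank_formula {N n l : ℕ} (q : Fin N → ℕ) (hinj : Function.Injective q)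
    (hlt : ∀ t, q t < n)
    (cover : ∀ x, x < n → (∃ t, q t = x) ∨ (∃ t : Fin N, (t : ℕ) < l ∧ q t + 1 = x))
    (disj : ∀ t t' : Fin N, (t : ℕ) < l → q t + 1 ≠ q t') (j : Fin N) :
    q j = (univ.filter fun t => q t < q j).card
        + (univ.filter fun t : Fin N => (t : ℕ) < l ∧ q t < q j).card := by
  classical
  have hAB : Finset.range (q j)
      = ((univ.filter fun t => q t < q j).image q)
        ∪ ((univ.filter fun t : Fin N => (t : ℕ) < l ∧ q t < q j).image (fun t => q t + 1)) := by
    ext x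
    simp only [Finset.mem_range, Finset.mem_union, Finset.mem_image, mem_filter, mem_univ,
      true_and]
    constructor
    · intro hx
      rcases cover x (lt_trans hx (hlt j)) with ⟨t, ht⟩ | ⟨t, htl, ht⟩
      · exact Or.inl ⟨t, by omega, ht⟩
      · exact Or.inr ⟨t, ⟨htl, by omega⟩, ht⟩
    · rintro (⟨t, ht, rfl⟩ | ⟨t, ⟨htl, ht⟩, rfl⟩)
      · exact ht
      · have := disj t j htl; omega
  have hdisj : Disjoint ((univ.filter fun t => q t < q j).image q)
      ((univ.filter fun t : Fin N => (t : ℕ) < l ∧ q t < q j).image (fun t => q t + 1)) := by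
    rw [Finset.disjoint_left]
    rintro x hx hx'
    rcases Finset.mem_image.1 hx with ⟨t, ht, rfl⟩
    rcases Finset.mem_image.1 hx' with ⟨t', ht', hxx⟩
    rw [mem_filter] at ht'
    exact disj t' t ht'.2.1 hxx
  have h1 : ((univ.filter fun t => q t < q j).image q).card
      = (univ.filter fun t => q t < q j).card := Finset.card_image_of_injective _ hinj
  have h2 : ((univ.filter fun t : Fin N => (t : ℕ) < l ∧ q t < q j).image (fun t => q t + 1)).card
      = (univ.filter fun t : Fin N => (t : ℕ) < l ∧ q t < q j).card :=
    Finset.card_image_of_injective _ (fun a b h => hinj (by omega))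
  have := congrArg Finset.card hAB
  rwa [Finset.card_range, Finset.card_union_of_disjoint hdisj, h1, h2] at this


/-- If `n!/(n-ℓ)! > 2^ℓ · k` for `ℓ = ⌊n/2⌋`, then a set of `n`
points carrying `k` strict linear orders admits a separated pairing: a family of
`ℓ` pairwise disjoint unordered pairs such that for every order `r i` some pair
is not `r i`-adjacent (some third point lies strictly between its two members). -/
theorem stmt6 (n k : ℕ)
    (hineq : Nat.factorial n / Nat.factorial (n - n / 2) > 2 ^ (n / 2) * k)
    (r : Fin k → Fin n → Fin n → Prop)
    (hr : ∀ i, IsStrictTotalOrder (Fin n) (r i)) :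
    ∃ P : Finset (Finset (Fin n)),
      P.card = n / 2 ∧ (∀ p ∈ P, p.card = 2) ∧
      (∀ p ∈ P, ∀ q ∈ P, p ≠ q → Disjoint p q) ∧
      ∀ i : Fin k, ∃ p ∈ P, ∃ a ∈ p, ∃ b ∈ p, a ≠ b ∧
        ∃ c : Fin n, (r i a c ∧ r i c b) ∨ (r i b c ∧ r i c a) := by
  classical
  by_contra hcon
  push_neg at hcon
  choose e he using fun i => exists_rank_equiv (r i) (hr i)
  set l := n / 2 with hldef
  have h2l : 2 * l ≤ n := by omega
  have hll : l ≤ n - l := by omega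
  -- positions
  have hx0 : ∀ j : Fin l, 2 * (j : ℕ) < n := fun j => by have := j.2; omega
  have hx1 : ∀ j : Fin l, 2 * (j : ℕ) + 1 < n := fun j => by have := j.2; omega
  let pos0 : Fin l → Fin n := fun j => ⟨2 * j, hx0 j⟩
  let pos1 : Fin l → Fin n := fun j => ⟨2 * j + 1, hx1 j⟩
  let pr : Equiv.Perm (Fin n) → Fin l → Finset (Fin n) := fun σ j => {σ (pos0 j), σ (pos1 j)}
  let P : Equiv.Perm (Fin n) → Finset (Finset (Fin n)) := fun σ => Finset.image (pr σ) Finset.univ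
  have hprinj : ∀ σ, Function.Injective (pr σ) := by
    intro σ j j' h
    have h0 : σ (pos0 j) ∈ pr σ j' := h ▸ Finset.mem_insert_self _ _
    rcases Finset.mem_insert.1 h0 with h1 | h1
    · have := σ.injective h1
      have : (pos0 j : ℕ) = (pos0 j' : ℕ) := congrArg Fin.val this
      simp only [pos0] at this
      exact Fin.ext (by omega)
    · have := σ.injective (Finset.mem_singleton.1 h1)
      have : (pos0 j : ℕ) = (pos1 j' : ℕ) := congrArg Fin.val this
      simp only [pos0, pos1] at this
      omega
  have hA : ∀ σ, (P σ).card = l := by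
    intro σ
    rw [Finset.card_image_of_injective _ (hprinj σ), Finset.card_univ, Fintype.card_fin]
  have hB : ∀ σ, ∀ p ∈ P σ, p.card = 2 := by
    intro σ p hp
    rcases Finset.mem_image.1 hp with ⟨j, _, rfl⟩
    refine Finset.card_pair ?_
    intro h
    have := σ.injective h
    have : (pos0 j : ℕ) = (pos1 j : ℕ) := congrArg Fin.val this
    simp only [pos0, pos1] at this
    omega
  have hC : ∀ σ, ∀ p ∈ P σ, ∀ q ∈ P σ, p ≠ q → Disjoint p q := by
    intro σ p hp q hq hpq
    rcases Finset.mem_image.1 hp with ⟨j, _, rfl⟩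
    rcases Finset.mem_image.1 hq with ⟨j', _, rfl⟩
    rw [Finset.disjoint_left]
    intro x hx hx'
    have hmem : ∀ (a : Fin l) (y : Fin n), y ∈ pr σ a → y = σ (pos0 a) ∨ y = σ (pos1 a) := by
      intro a y hy
      rcases Finset.mem_insert.1 hy with h1 | h1
      · exact Or.inl h1
      · exact Or.inr (Finset.mem_singleton.1 h1)
    have hjj' : j ≠ j' := fun h => hpq (by rw [h])
    rcases hmem j x hx with rfl | rfl <;> rcases hmem j' _ hx' with h1 | h1 <;>
      · have := congrArg Fin.val (σ.injective h1)
        simp only [pos0, pos1] at this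
        exact absurd (Fin.ext (by omega) : j = j') hjj'
  choose I HI using fun σ => hcon (P σ) (hA σ) (hB σ) (hC σ)
  -- F : value sequence
  let F : Equiv.Perm (Fin n) → Fin n → ℕ := fun σ p => (e (I σ) (σ p) : ℕ)
  have hFlt : ∀ σ p, F σ p < n := fun σ p => (e (I σ) (σ p)).2
  have hFinj : ∀ σ, Function.Injective (F σ) := by
    intro σ a b h
    exact σ.injective ((e (I σ)).injective (Fin.ext h))
  have hFsurj : ∀ σ, ∀ x, x < n → ∃ p, F σ p = x := by
    intro σ x hx
    exact ⟨σ.symm ((e (I σ)).symm ⟨x, hx⟩), by simp [F]⟩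
  -- adjacency
  have adj : ∀ σ (j : Fin l),
      F σ (pos1 j) = F σ (pos0 j) + 1 ∨ F σ (pos0 j) = F σ (pos1 j) + 1 := by
    intro σ j
    have hp : pr σ j ∈ P σ := Finset.mem_image_of_mem _ (Finset.mem_univ j)
    have ha : σ (pos0 j) ∈ pr σ j := Finset.mem_insert_self _ _
    have hb : σ (pos1 j) ∈ pr σ j := Finset.mem_insert.2 (Or.inr (Finset.mem_singleton_self _))
    have hab : σ (pos0 j) ≠ σ (pos1 j) := by
      intro h
      have := congrArg Fin.val (σ.injective h)
      simp only [pos0, pos1] at this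
      omega
    have H := HI σ (pr σ j) hp (σ (pos0 j)) ha (σ (pos1 j)) hb hab
    by_contra hne
    push_neg at hne
    obtain ⟨hne1, hne2⟩ := hne
    have huv : F σ (pos0 j) ≠ F σ (pos1 j) := fun h => hab (congrArg σ (hFinj σ h))
    rcases Nat.lt_or_ge (F σ (pos0 j)) (F σ (pos1 j)) with hlt1 | hge
    · have hcn : F σ (pos0 j) + 1 < n := by have := hFlt σ (pos1 j); omega
      set c := (e (I σ)).symm ⟨F σ (pos0 j) + 1, hcn⟩ with hc
      have hec : e (I σ) c = ⟨F σ (pos0 j) + 1, hcn⟩ := Equiv.apply_symm_apply _ _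
      have hra : r (I σ) (σ (pos0 j)) c := by
        rw [he (I σ), hec, Fin.lt_def]
        exact Nat.lt_succ_self _
      have hrb : r (I σ) c (σ (pos1 j)) := by
        rw [he (I σ), hec, Fin.lt_def]
        simp only [F] at hne1 hlt1 ⊢
        omega
      exact (H c).1 hra hrb
    · have hlt1 : F σ (pos1 j) < F σ (pos0 j) := by omega
      have hcn : F σ (pos1 j) + 1 < n := by have := hFlt σ (pos0 j); omega
      set c := (e (I σ)).symm ⟨F σ (pos1 j) + 1, hcn⟩ with hc
      have hec : e (I σ) c = ⟨F σ (pos1 j) + 1, hcn⟩ := Equiv.apply_symm_apply _ _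
      have hrb : r (I σ) (σ (pos1 j)) c := by
        rw [he (I σ), hec, Fin.lt_def]
        exact Nat.lt_succ_self _
      have hra : r (I σ) c (σ (pos0 j)) := by
        rw [he (I σ), hec, Fin.lt_def]
        simp only [F] at hne2 hlt1 ⊢
        omega
      exact (H c).2 hrb hra
  -- q values
  let qv : Equiv.Perm (Fin n) → Fin (n - l) → ℕ := fun σ t =>
    if h : (t : ℕ) < l then min (F σ (pos0 ⟨t, h⟩)) (F σ (pos1 ⟨t, h⟩))
    else F σ ⟨(t : ℕ) + l, by have := t.2; omega⟩
  -- each q value is an F value at a specific position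
  have hqpos : ∀ σ (t : Fin (n - l)), ∃ p : Fin n, qv σ t = F σ p ∧
      (((t : ℕ) < l ∧ ((p : ℕ) = 2 * t ∨ (p : ℕ) = 2 * t + 1)) ∨
       (¬ (t : ℕ) < l ∧ (p : ℕ) = (t : ℕ) + l)) := by
    intro σ t
    by_cases h : (t : ℕ) < l
    · rcases min_choice (F σ (pos0 ⟨t, h⟩)) (F σ (pos1 ⟨t, h⟩)) with hm | hm
      · exact ⟨pos0 ⟨t, h⟩, by simp only [qv, dif_pos h, hm], Or.inl ⟨h, Or.inl rfl⟩⟩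
      · exact ⟨pos1 ⟨t, h⟩, by simp only [qv, dif_pos h, hm], Or.inl ⟨h, Or.inr rfl⟩⟩
    · exact ⟨⟨(t : ℕ) + l, by have := t.2; omega⟩, by simp only [qv, dif_neg h],
        Or.inr ⟨h, rfl⟩⟩
  have hqlt : ∀ σ t, qv σ t < n := by
    intro σ t
    rcases hqpos σ t with ⟨p, hp, -⟩
    rw [hp]; exact hFlt σ p
  have hqinj : ∀ σ, Function.Injective (qv σ) := by
    intro σ a b h
    rcases hqpos σ a with ⟨p, hp, hcp⟩
    rcases hqpos σ b with ⟨p', hp', hcp'⟩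
    have hpp : p = p' := hFinj σ (by rw [← hp, ← hp', h])
    have := congrArg Fin.val hpp
    rcases hcp with ⟨ha, hpa⟩ | ⟨ha, hpa⟩ <;> rcases hcp' with ⟨hb, hpb⟩ | ⟨hb, hpb⟩ <;>
      exact Fin.ext (by omega)
  have hqcover : ∀ σ, ∀ x, x < n →
      (∃ t, qv σ t = x) ∨ (∃ t : Fin (n - l), (t : ℕ) < l ∧ qv σ t + 1 = x) := by
    intro σ x hx
    obtain ⟨p, hFp⟩ := hFsurj σ x hx
    by_cases hp2 : (p : ℕ) < 2 * l
    · have hjl : (p : ℕ) / 2 < l := by omega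
      set j : Fin l := ⟨(p : ℕ) / 2, hjl⟩ with hj
      have htnl : (p : ℕ) / 2 < n - l := by omega
      set t : Fin (n - l) := ⟨(p : ℕ) / 2, htnl⟩ with ht
      have htl : (t : ℕ) < l := hjl
      have hqt : qv σ t = min (F σ (pos0 j)) (F σ (pos1 j)) := by
        simp only [qv, dif_pos htl]; rfl
      have hpcase : p = pos0 j ∨ p = pos1 j := by
        rcases Nat.even_or_odd (p : ℕ) with hpar | hpar
        · exact Or.inl (Fin.ext (by obtain ⟨m, hm⟩ := hpar; show (p : ℕ) = 2 * ((p : ℕ) / 2); omega))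
        · exact Or.inr (Fin.ext (by obtain ⟨m, hm⟩ := hpar; show (p : ℕ) = 2 * ((p : ℕ) / 2) + 1; omega))
      have hxm : x = qv σ t ∨ x = qv σ t + 1 := by
        rcases adj σ j with hadj | hadj <;> rcases hpcase with hpc | hpc <;>
          rw [hpc] at hFp <;> omega
      rcases hxm with hxx | hxx
      · exact Or.inl ⟨t, hxx.symm⟩
      · exact Or.inr ⟨t, htl, hxx.symm⟩
    · have htnl : (p : ℕ) - l < n - l := by have := p.2; omega
      set t : Fin (n - l) := ⟨(p : ℕ) - l, htnl⟩ with ht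
      have htl : ¬ (t : ℕ) < l := by simp only [ht]; omega
      refine Or.inl ⟨t, ?_⟩
      have : qv σ t = F σ ⟨(t : ℕ) + l, by have := p.2; simp only [ht]; omega⟩ := by
        simp only [qv, dif_neg htl]
      rw [this, ← hFp]
      congr 1
      exact Fin.ext (by simp only [ht]; omega)
  have hqdisj : ∀ σ, ∀ t t' : Fin (n - l), (t : ℕ) < l → qv σ t + 1 ≠ qv σ t' := by
    intro σ t t' htl h
    set j : Fin l := ⟨(t : ℕ), htl⟩ with hj
    have hqt : qv σ t = min (F σ (pos0 j)) (F σ (pos1 j)) := by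
      simp only [qv, dif_pos htl]; rfl
    have hmax : ∃ pm : Fin n, qv σ t + 1 = F σ pm ∧
        ((pm : ℕ) = 2 * (t : ℕ) ∨ (pm : ℕ) = 2 * (t : ℕ) + 1) := by
      rcases adj σ j with hadj | hadj
      · exact ⟨pos1 j, by omega, Or.inr rfl⟩
      · exact ⟨pos0 j, by omega, Or.inl rfl⟩
    obtain ⟨pm, hpm, hpmv⟩ := hmax
    rcases hqpos σ t' with ⟨p', hp', hcp'⟩
    have hpp : pm = p' := hFinj σ (by rw [← hpm, ← hp', h])
    have hv := congrArg Fin.val hpp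
    rcases hcp' with ⟨hb, hpb⟩ | ⟨hb, hpb⟩
    · have htt : t = t' := Fin.ext (by omega)
      rw [← htt] at h
      omega
    · omega
  -- rank
  have hrkbound : ∀ σ (j : Fin (n - l)),
      (univ.filter fun t => qv σ t < qv σ j).card < n - l := by
    intro σ j
    have hsub : (univ.filter fun t => qv σ t < qv σ j) ⊆ univ.erase j := by
      intro t ht
      rw [mem_filter] at ht
      refine Finset.mem_erase.2 ⟨fun h => ?_, Finset.mem_univ _⟩
      rw [h] at ht; omega
    calc (univ.filter fun t => qv σ t < qv σ j).card ≤ (univ.erase j).card :=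
          Finset.card_le_card hsub
      _ < univ.card := Finset.card_erase_lt_of_mem (Finset.mem_univ j)
      _ = n - l := by rw [Finset.card_univ, Fintype.card_fin]
  let rk : Equiv.Perm (Fin n) → Fin (n - l) → Fin (n - l) := fun σ j =>
    ⟨(univ.filter fun t => qv σ t < qv σ j).card, hrkbound σ j⟩
  have hrkinj : ∀ σ, Function.Injective (rk σ) := by
    intro σ a b h
    have h' : (rk σ a : ℕ) = (rk σ b : ℕ) := congrArg Fin.val h
    simp only [rk] at h'
    by_contra hab
    have hq : qv σ a ≠ qv σ b := fun h => hab (hqinj σ h)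
    rcases lt_or_gt_of_ne hq with h1 | h1
    · have := (rank_lt_iff (hqinj σ) a b).2 h1; omega
    · have := (rank_lt_iff (hqinj σ) b a).2 h1; omega
  let bits : Equiv.Perm (Fin n) → Fin l → Bool := fun σ j => decide (F σ (pos1 j) < F σ (pos0 j))
  let Φ : Equiv.Perm (Fin n) → Fin k × (Fin l → Bool) × (Fin (n - l) ↪ Fin (n - l)) :=
    fun σ => (I σ, bits σ, ⟨rk σ, hrkinj σ⟩)
  have hΦinj : Function.Injective Φ := by
    intro σ σ' hΦ
    simp only [Φ, Prod.mk.injEq, Function.Embedding.mk.injEq] at hΦ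
    obtain ⟨h1, h2, h3⟩ := hΦ
    have hq : qv σ = qv σ' := by
      funext j
      have key : ∀ τ : Equiv.Perm (Fin n), qv τ j = (rk τ j : ℕ) +
          (univ.filter fun t : Fin (n - l) => (t : ℕ) < l ∧ (rk τ t : ℕ) < (rk τ j : ℕ)).card := by
        intro τ
        have e1 := rank_formula (qv τ) (hqinj τ) (hqlt τ) (hqcover τ) (hqdisj τ) j
        have hfeq : (univ.filter fun t : Fin (n - l) => (t : ℕ) < l ∧ qv τ t < qv τ j)
            = (univ.filter fun t : Fin (n - l) => (t : ℕ) < l ∧ (rk τ t : ℕ) < (rk τ j : ℕ)) := by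
          apply Finset.filter_congr
          intro t _
          have := rank_lt_iff (hqinj τ) t j
          constructor
          · rintro ⟨ha, hb⟩; exact ⟨ha, this.2 hb⟩
          · rintro ⟨ha, hb⟩; exact ⟨ha, this.1 hb⟩
        rw [hfeq] at e1
        exact e1
      rw [key σ, key σ', h3]
    have hF : ∀ p : Fin n, F σ p = F σ' p := by
      intro p
      by_cases hp2 : (p : ℕ) < 2 * l
      · have hjl : (p : ℕ) / 2 < l := by omega
        set j : Fin l := ⟨(p : ℕ) / 2, hjl⟩ with hj
        have htnl : (p : ℕ) / 2 < n - l := by omega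
        set t : Fin (n - l) := ⟨(p : ℕ) / 2, htnl⟩ with ht
        have htl : (t : ℕ) < l := hjl
        have orient : ∀ τ : Equiv.Perm (Fin n),
            F τ (pos0 j) = (if bits τ j then qv τ t + 1 else qv τ t) ∧
            F τ (pos1 j) = (if bits τ j then qv τ t else qv τ t + 1) := by
          intro τ
          have hqt : qv τ t = min (F τ (pos0 j)) (F τ (pos1 j)) := by
            simp only [qv, dif_pos htl]; rfl
          rcases adj τ j with hadj | hadj
          · have hbb : bits τ j = false := by
              simp only [bits, decide_eq_false_iff_not]
              omega
            rw [hbb]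
            simp only [if_neg Bool.false_ne_true, Bool.false_eq_true, if_false]
            omega
          · have hbb : bits τ j = true := by
              simp only [bits, decide_eq_true_eq]
              omega
            rw [hbb]
            simp only [if_true]
            omega
        have hpcase : p = pos0 j ∨ p = pos1 j := by
          rcases Nat.even_or_odd (p : ℕ) with hpar | hpar
          · exact Or.inl (Fin.ext (by obtain ⟨m, hm⟩ := hpar; show (p : ℕ) = 2 * ((p : ℕ) / 2); omega))
          · exact Or.inr (Fin.ext (by obtain ⟨m, hm⟩ := hpar; show (p : ℕ) = 2 * ((p : ℕ) / 2) + 1; omega))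
        rcases hpcase with hpc | hpc
        · rw [hpc, (orient σ).1, (orient σ').1, h2, hq]
        · rw [hpc, (orient σ).2, (orient σ').2, h2, hq]
      · have htnl : (p : ℕ) - l < n - l := by have := p.2; omega
        set t : Fin (n - l) := ⟨(p : ℕ) - l, htnl⟩ with ht
        have htl : ¬ (t : ℕ) < l := by simp only [ht]; omega
        have hval : ∀ τ : Equiv.Perm (Fin n), qv τ t = F τ p := by
          intro τ
          have : qv τ t = F τ ⟨(t : ℕ) + l, by have := p.2; simp only [ht]; omega⟩ := by
            simp only [qv, dif_neg htl]
          rw [this]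
          congr 1
          exact Fin.ext (by simp only [ht]; omega)
        rw [← hval σ, ← hval σ', hq]
    apply Equiv.ext
    intro p
    have := hF p
    simp only [F] at this
    rw [← h1] at this
    exact (e (I σ)).injective (Fin.ext this)
  -- cardinality contradiction
  have hcard := Fintype.card_le_of_injective Φ hΦinj
  rw [Fintype.card_perm, Fintype.card_fin, Fintype.card_prod, Fintype.card_prod,
    Fintype.card_fin, Fintype.card_fun, Fintype.card_bool, Fintype.card_fin,
    Fintype.card_embedding_eq, Fintype.card_fin, Nat.descFactorial_self] at hcard
  have hdvd : Nat.factorial (n - l) ∣ Nat.factorial n :=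
    Nat.factorial_dvd_factorial (Nat.sub_le n l)
  have hmul : Nat.factorial n / Nat.factorial (n - l) * Nat.factorial (n - l)
      = Nat.factorial n := Nat.div_mul_cancel hdvd
  have hlt : 2 ^ l * k * Nat.factorial (n - l) < Nat.factorial n := by
    calc 2 ^ l * k * Nat.factorial (n - l)
        < Nat.factorial n / Nat.factorial (n - l) * Nat.factorial (n - l) :=
          (Nat.mul_lt_mul_right (Nat.factorial_pos _)).2 hineq
      _ = Nat.factorial n := hmul
  have : Nat.factorial n ≤ 2 ^ l * k * Nat.factorial (n - l) := by
    calc Nat.factorial n ≤ k * (2 ^ l * Nat.factorial (n - l)) := hcard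
      _ = 2 ^ l * k * Nat.factorial (n - l) := by ring
  omega
end

section
/- Let Γ be a homogeneous finite-dimensional permutation structure (finitely many linear orders), E a minimal non-trivial ∅-definable equivalence relation on Γ, and C, C′ distinct E-classes. Then no 2-type p is realized both by a pair (c, c′) with c ∈ C, c′ ∈ C′ and by a pair (c′′, c′′′) with c′′ ∈ C′, c′′′ ∈ C. -/
/-- In a homogeneous finite-dimensional permutation structure, if
`E` is a minimal non-trivial ∅-definable equivalence relation (∅-definable =
a union of 2-types, i.e. `E x y` depends only on the quantifier-free 2-type of
`(x,y)`), and `C = a/E ≠ a'/E` are distinct `E`-classes, then no 2-type is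
realized both in `C × C'` and in `C' × C`: there are no `a, b ∈ C`,
`a', b' ∈ C'` with `tp(a,b') = tp(a',b)`. -/
theorem stmt10 {Γ : Type*} (k : ℕ) (o : Fin k → Γ → Γ → Prop)
    (ho : ∀ i, IsStrictTotalOrder Γ (o i))
    -- homogeneity
    (hom : ∀ (A : Finset Γ) (f : Γ → Γ),
      (∀ a ∈ A, ∀ b ∈ A, ∀ i, o i a b ↔ o i (f a) (f b)) →
      ∃ g : Γ ≃ Γ, (∀ i x y, o i x y ↔ o i (g x) (g y)) ∧ ∀ a ∈ A, g a = f a)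
    (E : Γ → Γ → Prop) (hE : Equivalence E)
    -- E is a union of 2-types (∅-definable)
    (hdef : ∀ x y x' y' : Γ, x ≠ y → x' ≠ y' →
      (∀ i, o i x y ↔ o i x' y') → (E x y ↔ E x' y'))
    -- E is non-trivial
    (hnontriv : (∃ x y, x ≠ y ∧ E x y) ∧ (∃ x y, ¬ E x y))
    -- E is minimal among non-trivial ∅-definable equivalence relations
    (hmin : ∀ E' : Γ → Γ → Prop, Equivalence E' →
      (∀ x y x' y' : Γ, x ≠ y → x' ≠ y' →
        (∀ i, o i x y ↔ o i x' y') → (E' x y ↔ E' x' y')) →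
      (∃ x y, x ≠ y ∧ E' x y) → (∀ x y, E' x y → E x y) →
      ∀ x y, E' x y ↔ E x y)
    (a b a' b' : Γ)
    (hab : E a b) (ha'b' : E a' b') (hdistinct : ¬ E a a')
    (htp : ∀ i, o i a b' ↔ o i a' b) : False := by
  classical
  -- basic order facts
  have otrans : ∀ i {x y z : Γ}, o i x y → o i y z → o i x z := by
    intro i x y z hxy hyz
    letI := ho i
    exact IsTrans.trans x y z hxy hyz
  have oirrefl : ∀ i (x : Γ), ¬ o i x x := by
    intro i x
    letI := ho i
    exact Std.Irrefl.irrefl x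
  have otrich : ∀ i (x y : Γ), o i x y ∨ x = y ∨ o i y x := by
    intro i x y
    letI := ho i
    exact trichotomous (r := o i) x y
  have oasymm : ∀ i {x y : Γ}, o i x y → ¬ o i y x := by
    intro i x y hxy hyx
    exact oirrefl i x (otrans i hxy hyx)
  -- degenerate case k = 0 : then E is constant on distinct pairs
  rcases Nat.eq_zero_or_pos k with hk | hk
  · obtain ⟨⟨x, y, hxy, hExy⟩, ⟨u, v, hnEuv⟩⟩ := hnontriv
    have huv : u ≠ v := by
      rintro rfl
      exact hnEuv (hE.refl u)
    exact hnEuv ((hdef x y u v hxy huv (fun i => absurd i.isLt (by omega))).mp hExy)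
  -- main case
  have i0 : Fin k := ⟨0, hk⟩
  -- basic distinctness facts
  have hnEab' : ¬ E a b' := fun h => hdistinct (hE.trans h (hE.symm ha'b'))
  have hnEa'b : ¬ E a' b := fun h => hdistinct (hE.trans hab (hE.symm h))
  have hab'ne : a ≠ b' := by
    rintro rfl
    exact hnEab' (hE.refl a)
  have ha'bne : a' ≠ b := by
    rintro rfl
    exact hnEa'b (hE.refl a')
  have hnEbb' : ¬ E b b' := fun h => hdistinct (hE.trans (hE.trans hab h) (hE.symm ha'b'))
  have hbb'ne : b ≠ b' := by
    rintro rfl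
    exact hnEbb' (hE.refl b)
  have hba'ne : b ≠ a' := ha'bne.symm
  -- the partial map a' ↦ a, b ↦ b' preserves all orders
  have hcomp : ∀ x ∈ ({a', b} : Finset Γ), ∀ y ∈ ({a', b} : Finset Γ), ∀ i,
      o i x y ↔ o i ((fun x => if x = a' then a else if x = b then b' else x) x)
        ((fun x => if x = a' then a else if x = b then b' else x) y) := by
    intro x hx y hy i
    simp only []
    rw [Finset.mem_insert, Finset.mem_singleton] at hx hy
    rcases hx with hx | hx <;> rcases hy with hy | hy <;> cases hx.symm <;> cases hy.symm
    · rw [if_pos rfl]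
      exact iff_of_false (oirrefl i a') (oirrefl i a)
    · rw [if_pos rfl, if_neg hba'ne, if_pos rfl]
      exact (htp i).symm
    · rw [if_pos rfl, if_neg hba'ne, if_pos rfl]
      constructor
      · intro h
        rcases otrich i b' a with h' | h' | h'
        · exact h'
        · exact absurd h'.symm hab'ne
        · exact absurd h ((htp i).mp h' |> oasymm i)
      · intro h
        rcases otrich i b a' with h' | h' | h'
        · exact h'
        · exact absurd h' hba'ne
        · exact absurd h ((htp i).mpr h' |> oasymm i)
    · rw [if_neg hba'ne, if_pos rfl]
      exact iff_of_false (oirrefl i b) (oirrefl i b')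
  obtain ⟨g, hg, hgA⟩ := hom {a', b} (fun x => if x = a' then a else if x = b then b' else x) hcomp
  have hga' : g a' = a := by
    have := hgA a' (by simp)
    simpa using this
  have hgb : g b = b' := by
    have := hgA b (by simp)
    simpa [hba'ne] using this
  -- the point c = g b' lies in the class of a, and tp(b', c) = tp(b, b')
  set c : Γ := g b' with hc
  have hEac : E a c := by
    rcases eq_or_ne a' b' with h | h
    · have : c = a := by rw [hc, ← h, hga']
      rw [this]
      exact hE.refl a
    · have hgne : g a' ≠ g b' := g.injective.ne h
      have := (hdef a' b' (g a') (g b') h hgne (fun i => hg i a' b')).mp ha'b'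
      rwa [hga'] at this
  have hEbc : E b c := hE.trans (hE.symm hab) hEac
  have hcb'ne : c ≠ b' := by
    intro h
    rw [h] at hEbc
    exact hnEbb' hEbc
  -- tp(b', c) = tp(b, b')
  have h1 : ∀ i, o i b b' ↔ o i b' c := by
    intro i
    have := hg i b b'
    rwa [hgb] at this
  -- by transitivity of the orders, tp(b, c) = tp(b, b')
  have h4 : ∀ i, o i b b' ↔ o i b c := by
    intro i
    constructor
    · intro h
      exact otrans i h ((h1 i).mp h)
    · intro h
      rcases otrich i b b' with h' | h' | h'
      · exact h'
      · exact absurd h' hbb'ne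
      · -- o i b' b; then ¬ o i b b', so ¬ o i b' c, so o i c b', so o i c b, contra
        exfalso
        have hnbb' : ¬ o i b b' := oasymm i h'
        have hnb'c : ¬ o i b' c := fun hh => hnbb' ((h1 i).mpr hh)
        have hcb' : o i c b' := by
          rcases otrich i c b' with h'' | h'' | h'' 
          · exact h''
          · exact absurd h'' hcb'ne
          · exact absurd h'' hnb'c
        exact oasymm i h (otrans i hcb' h')
  have hbcne : b ≠ c := by
    intro hbc
    have hnbb' : ¬ o i0 b b' := by
      intro h
      have := (h4 i0).mp h
      rw [← hbc] at this
      exact oirrefl i0 b this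
    have hnb'b : ¬ o i0 b' b := by
      intro h
      rw [hbc] at h
      exact hnbb' ((h1 i0).mpr h)
    rcases otrich i0 b b' with h | h | h
    · exact hnbb' h
    · exact hbb'ne h
    · exact hnb'b h
  -- final contradiction with definability of E
  exact hnEbb' ((hdef b b' b c hbb'ne hbcne h4).mpr hEbc)
end

section
/- Let Γ be a homogeneous 3-dimensional permutation structure (orders <₁,<₂,<₃), E a minimal non-trivial ∅-definable equivalence relation, and suppose the 2-type →123 (x <₁ y ∧ x <₂ y ∧ x <₃ y) is contained in E. Let C be an E-class, a₁, a₂ ∈ C, b ∉ C with a₁ <₁ b <₁ a₂. Then either (tp(a₁,b) = →12 and tp(b,a₂) = →13) or (tp(a₁,b) = →13 and tp(b,a₂) = →12), where →1i denotes the 2-type asserting <₁ and <_i but the reverse of the remaining order. -/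
/-- Cross-type lemma.  In a homogeneous 3-dimensional permutation
structure with minimal non-trivial ∅-definable equivalence relation `E`
containing the 2-type `→123`, if `a₁, a₂` lie in an `E`-class `C`, `b ∉ C`, and
`a₁ <₁ b <₁ a₂`, then either `tp(a₁,b) = →12` and `tp(b,a₂) = →13`, or
`tp(a₁,b) = →13` and `tp(b,a₂) = →12`.  Orders: `<₁ = o 0`, `<₂ = o 1`,
`<₃ = o 2`. -/
theorem stmt11 {Γ : Type*} (o : Fin 3 → Γ → Γ → Prop)
    (ho : ∀ i, IsStrictTotalOrder Γ (o i))
    (hom : ∀ (A : Finset Γ) (f : Γ → Γ),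
      (∀ a ∈ A, ∀ b ∈ A, ∀ i, o i a b ↔ o i (f a) (f b)) →
      ∃ g : Γ ≃ Γ, (∀ i x y, o i x y ↔ o i (g x) (g y)) ∧ ∀ a ∈ A, g a = f a)
    (E : Γ → Γ → Prop) (hE : Equivalence E)
    (hdef : ∀ x y x' y' : Γ, x ≠ y → x' ≠ y' →
      (∀ i, o i x y ↔ o i x' y') → (E x y ↔ E x' y'))
    (hnontriv : (∃ x y, x ≠ y ∧ E x y) ∧ (∃ x y, ¬ E x y))
    (hmin : ∀ E' : Γ → Γ → Prop, Equivalence E' →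
      (∀ x y x' y' : Γ, x ≠ y → x' ≠ y' →
        (∀ i, o i x y ↔ o i x' y') → (E' x y ↔ E' x' y')) →
      (∃ x y, x ≠ y ∧ E' x y) → (∀ x y, E' x y → E x y) →
      ∀ x y, E' x y ↔ E x y)
    -- the 2-type →123 is contained in E
    (h123 : ∀ x y, (∀ i, o i x y) → E x y)
    (a₁ a₂ b : Γ)
    (hC : E a₁ a₂) (hb : ¬ E a₁ b)
    (h1 : o 0 a₁ b) (h2 : o 0 b a₂) :
    ((o 0 a₁ b ∧ o 1 a₁ b ∧ o 2 b a₁) ∧ (o 0 b a₂ ∧ o 2 b a₂ ∧ o 1 a₂ b)) ∨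
      ((o 0 a₁ b ∧ o 2 a₁ b ∧ o 1 b a₁) ∧ (o 0 b a₂ ∧ o 1 b a₂ ∧ o 2 a₂ b)) := by
  have irr : ∀ i x, ¬ o i x x := fun i x => (ho i).irrefl x
  have asy : ∀ i x y, o i x y → ¬ o i y x := fun i x y h h' =>
    irr i x ((ho i).trans _ _ _ h h')
  have tr : ∀ i x y z, o i x y → o i y z → o i x z := fun i => (ho i).trans
  have tri : ∀ i x y, x ≠ y → o i x y ∨ o i y x := by
    intro i x y hxy
    rcases (show o i x y ∨ x = y ∨ o i y x from (em (o i x y)).elim Or.inl fun a => (em (o i y x)).elim (fun b => Or.inr (Or.inr b)) fun b => Or.inr (Or.inl ((ho i).trichotomous x y a b))) with h | h | h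
    · exact Or.inl h
    · exact absurd h hxy
    · exact Or.inr h
  have hab : a₁ ≠ b := fun h => irr 0 _ (h ▸ h1)
  have hba2 : b ≠ a₂ := fun h => irr 0 _ (h ▸ h2)
  have h0 : o 0 a₁ a₂ := tr 0 _ _ _ h1 h2
  have ha12 : a₁ ≠ a₂ := fun h => irr 0 _ (h ▸ h0)
  have hb2 : ¬ E b a₂ := fun h => hb (hE.trans hC (hE.symm h))
  have mk : ∀ {x y x' y' : Γ}, (o 0 x y ↔ o 0 x' y') → (o 1 x y ↔ o 1 x' y') →
      (o 2 x y ↔ o 2 x' y') → ∀ i, o i x y ↔ o i x' y' := by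
    intro x y x' y' k0 k1 k2 i
    fin_cases i <;> assumption
  have key : ∀ x y x' y', x ≠ y → x' ≠ y' → ¬ E x y → E x' y' →
      (∀ i, o i x y ↔ o i x' y') → False :=
    fun x y x' y' hxy hx'y' hne hE' hiff => hne ((hdef x y x' y' hxy hx'y' hiff).mpr hE')
  have all : ∀ x y, o 0 x y → o 1 x y → o 2 x y → E x y := by
    intro x y k0 k1 k2
    exact h123 x y (by intro i; fin_cases i <;> assumption)
  rcases tri 1 a₁ b hab with p1 | p1 <;> rcases tri 2 a₁ b hab with p2 | p2
  · exact absurd (all a₁ b h1 p1 p2) hb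
  all_goals rcases tri 1 b a₂ hba2 with q1 | q1 <;> rcases tri 2 b a₂ hba2 with q2 | q2
  -- case tp(a₁,b) = →12  (p1 : o1 a₁ b, p2 : o2 b a₁)
  · exact absurd (all b a₂ h2 q1 q2) hb2
  · -- (12,12): tp(a₁,a₂)=12, same as tp(a₁,b)
    exact absurd (key a₁ b a₁ a₂ hab ha12 hb hC (mk (iff_of_true h1 h0)
      (iff_of_true p1 (tr 1 _ _ _ p1 q1))
      (iff_of_false (asy 2 _ _ p2) (asy 2 _ _ (tr 2 _ _ _ q2 p2))))) not_false
  · -- (12,13): allowed, left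
    exact Or.inl ⟨⟨h1, p1, p2⟩, ⟨h2, q2, q1⟩⟩
  · -- (12,1): q1 : o1 a₂ b, q2 : o2 a₂ b
    have c2 : o 2 a₂ a₁ := tr 2 _ _ _ q2 p2
    rcases tri 1 a₁ a₂ ha12 with c1 | c1
    · exact absurd (key a₁ b a₁ a₂ hab ha12 hb hC (mk (iff_of_true h1 h0)
        (iff_of_true p1 c1) (iff_of_false (asy 2 _ _ p2) (asy 2 _ _ c2)))) not_false
    · exact absurd (key b a₂ a₁ a₂ hba2 ha12 hb2 hC (mk (iff_of_true h2 h0)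
        (iff_of_false (asy 1 _ _ q1) (asy 1 _ _ c1))
        (iff_of_false (asy 2 _ _ q2) (asy 2 _ _ c2)))) not_false
  -- case tp(a₁,b) = →13  (p1 : o1 b a₁, p2 : o2 a₁ b)
  · exact absurd (all b a₂ h2 q1 q2) hb2
  · -- (13,12): allowed, right
    exact Or.inr ⟨⟨h1, p2, p1⟩, ⟨h2, q1, q2⟩⟩
  · -- (13,13): tp(a₁,a₂)=13
    exact absurd (key a₁ b a₁ a₂ hab ha12 hb hC (mk (iff_of_true h1 h0)
      (iff_of_false (asy 1 _ _ p1) (asy 1 _ _ (tr 1 _ _ _ q1 p1)))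
      (iff_of_true p2 (tr 2 _ _ _ p2 q2)))) not_false
  · -- (13,1)
    have c1 : o 1 a₂ a₁ := tr 1 _ _ _ q1 p1
    rcases tri 2 a₁ a₂ ha12 with c2 | c2
    · exact absurd (key a₁ b a₁ a₂ hab ha12 hb hC (mk (iff_of_true h1 h0)
        (iff_of_false (asy 1 _ _ p1) (asy 1 _ _ c1)) (iff_of_true p2 c2))) not_false
    · exact absurd (key b a₂ a₁ a₂ hba2 ha12 hb2 hC (mk (iff_of_true h2 h0)
        (iff_of_false (asy 1 _ _ q1) (asy 1 _ _ c1))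
        (iff_of_false (asy 2 _ _ q2) (asy 2 _ _ c2)))) not_false
  -- case tp(a₁,b) = →1  (p1 : o1 b a₁, p2 : o2 b a₁)
  · exact absurd (all b a₂ h2 q1 q2) hb2
  · -- (1,12): q1 : o1 b a₂, q2 : o2 a₂ b
    have c2 : o 2 a₂ a₁ := tr 2 _ _ _ q2 p2
    rcases tri 1 a₁ a₂ ha12 with c1 | c1
    · exact absurd (key b a₂ a₁ a₂ hba2 ha12 hb2 hC (mk (iff_of_true h2 h0)
        (iff_of_true q1 c1) (iff_of_false (asy 2 _ _ q2) (asy 2 _ _ c2)))) not_false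
    · exact absurd (key a₁ b a₁ a₂ hab ha12 hb hC (mk (iff_of_true h1 h0)
        (iff_of_false (asy 1 _ _ p1) (asy 1 _ _ c1))
        (iff_of_false (asy 2 _ _ p2) (asy 2 _ _ c2)))) not_false
  · -- (1,13): q1 : o1 a₂ b, q2 : o2 b a₂
    have c1 : o 1 a₂ a₁ := tr 1 _ _ _ q1 p1
    rcases tri 2 a₁ a₂ ha12 with c2 | c2
    · exact absurd (key b a₂ a₁ a₂ hba2 ha12 hb2 hC (mk (iff_of_true h2 h0)
        (iff_of_false (asy 1 _ _ q1) (asy 1 _ _ c1)) (iff_of_true q2 c2))) not_false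
    · exact absurd (key a₁ b a₁ a₂ hab ha12 hb hC (mk (iff_of_true h1 h0)
        (iff_of_false (asy 1 _ _ p1) (asy 1 _ _ c1))
        (iff_of_false (asy 2 _ _ p2) (asy 2 _ _ c2)))) not_false
  · -- (1,1)
    have c1 : o 1 a₂ a₁ := tr 1 _ _ _ q1 p1
    have c2 : o 2 a₂ a₁ := tr 2 _ _ _ q2 p2
    exact absurd (key a₁ b a₁ a₂ hab ha12 hb hC (mk (iff_of_true h1 h0)
      (iff_of_false (asy 1 _ _ p1) (asy 1 _ _ c1))
      (iff_of_false (asy 2 _ _ p2) (asy 2 _ _ c2)))) not_false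
end

section
/- Let Γ be a homogeneous 3-dimensional permutation structure with a minimal non-trivial ∅-definable equivalence relation E containing the 2-type →123, and let C be an E-class. If b lies in the <₁-convex closure of C but b ∉ C, then the entire E-class of b is contained in the <₁-convex closure of C. -/
/-- In a homogeneous 3-dimensional permutation structure with
minimal non-trivial ∅-definable equivalence relation `E` containing `→123`, if
`b` lies in the `<₁`-convex closure of an `E`-class `C` (i.e. `<₁`-between two
elements of `C`) but `b ∉ C`, then every point `E`-equivalent to `b` also lies
in the `<₁`-convex closure of `C`.  Here `<₁ = o 0`, and `C = c/E`. -/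
theorem stmt12 {Γ : Type*} (o : Fin 3 → Γ → Γ → Prop)
    (ho : ∀ i, IsStrictTotalOrder Γ (o i))
    (hom : ∀ (A : Finset Γ) (f : Γ → Γ),
      (∀ a ∈ A, ∀ b ∈ A, ∀ i, o i a b ↔ o i (f a) (f b)) →
      ∃ g : Γ ≃ Γ, (∀ i x y, o i x y ↔ o i (g x) (g y)) ∧ ∀ a ∈ A, g a = f a)
    (E : Γ → Γ → Prop) (hE : Equivalence E)
    (hdef : ∀ x y x' y' : Γ, x ≠ y → x' ≠ y' →
      (∀ i, o i x y ↔ o i x' y') → (E x y ↔ E x' y'))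
    (hnontriv : (∃ x y, x ≠ y ∧ E x y) ∧ (∃ x y, ¬ E x y))
    (hmin : ∀ E' : Γ → Γ → Prop, Equivalence E' →
      (∀ x y x' y' : Γ, x ≠ y → x' ≠ y' →
        (∀ i, o i x y ↔ o i x' y') → (E' x y ↔ E' x' y')) →
      (∃ x y, x ≠ y ∧ E' x y) → (∀ x y, E' x y → E x y) →
      ∀ x y, E' x y ↔ E x y)
    (h123 : ∀ x y, (∀ i, o i x y) → E x y)
    (c b : Γ)
    -- b lies in the <₁-convex closure of C = c/E but not in C
    (hconv : ∃ a₁ a₂, E c a₁ ∧ E c a₂ ∧ o 0 a₁ b ∧ o 0 b a₂)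
    (hb : ¬ E c b) :
    ∀ b', E b b' → ∃ a₁ a₂, E c a₁ ∧ E c a₂ ∧ o 0 a₁ b' ∧ o 0 b' a₂ := by
  classical
  -- basic order facts
  have htr : ∀ i : Fin 3, ∀ x y z : Γ, o i x y → o i y z → o i x z := by
    intro i x y z h1 h2
    haveI := ho i
    exact trans_of (o i) h1 h2
  have hirr : ∀ i : Fin 3, ∀ x : Γ, ¬ o i x x := by
    intro i x
    haveI := ho i
    exact irrefl_of (o i) x
  have hasym : ∀ i : Fin 3, ∀ x y : Γ, o i x y → ¬ o i y x :=
    fun i x y h h' => hirr i x (htr i x y x h h')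
  have htri : ∀ i : Fin 3, ∀ x y : Γ, x ≠ y → o i x y ∨ o i y x := by
    intro i x y hne
    haveI := ho i
    rcases trichotomous_of (o i) x y with h | h | h
    exacts [Or.inl h, absurd h hne, Or.inr h]
  have hneq : ∀ i : Fin 3, ∀ x y : Γ, o i x y → x ≠ y := by
    intro i x y h he
    exact hirr i x (he ▸ h)
  have all3 : ∀ {p q : Γ}, o 0 p q → o 1 p q → o 2 p q → ∀ i, o i p q := by
    intro p q h0 h1 h2 i
    fin_cases i <;> assumption
  have mk2 : ∀ p q p' q' : Γ, o 0 p q → o 0 p' q' → (o 1 p q ↔ o 1 p' q') →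
      (o 2 p q ↔ o 2 p' q') → ∀ i, o i p q ↔ o i p' q' := by
    intro p q p' q' h0 h0' h1 h2 i
    fin_cases i
    exacts [iff_of_true h0 h0', h1, h2]
  -- the cross-type lemma
  have cross : ∀ x y z : Γ, o 0 x y → o 0 y z → E x z → ¬ E x y →
      ((o 1 x y ∧ o 2 y x) ∧ (o 2 y z ∧ o 1 z y)) ∨
      ((o 2 x y ∧ o 1 y x) ∧ (o 1 y z ∧ o 2 z y)) := by
    intro x y z h0xy h0yz hExz hnExy
    have h0xz : o 0 x z := htr 0 x y z h0xy h0yz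
    have hnxy : x ≠ y := hneq 0 x y h0xy
    have hnyz : y ≠ z := hneq 0 y z h0yz
    have hnxz : x ≠ z := hneq 0 x z h0xz
    have hnEyz : ¬ E y z := fun h => hnExy (hE.trans hExz (hE.symm h))
    have key : ∀ p q : Γ, o 0 p q → ¬ E p q → (∀ i, o i p q ↔ o i x z) → False :=
      fun p q h0 hn ht => hn ((hdef p q x z (hneq 0 p q h0) hnxz ht).mpr hExz)
    rcases htri 1 x y hnxy with a1 | a1 <;>
      rcases htri 2 x y hnxy with a2 | a2 <;>
        rcases htri 1 y z hnyz with b1 | b1 <;>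
          rcases htri 2 y z hnyz with b2 | b2
    -- 1: UUUU
    · exact absurd (h123 x y (all3 h0xy a1 a2)) hnExy
    -- 2: UUUD
    · exact absurd (h123 x y (all3 h0xy a1 a2)) hnExy
    -- 3: UUDU
    · exact absurd (h123 x y (all3 h0xy a1 a2)) hnExy
    -- 4: UUDD
    · exact absurd (h123 x y (all3 h0xy a1 a2)) hnExy
    -- 5: UDUU
    · exact absurd (h123 y z (all3 h0yz b1 b2)) hnEyz
    -- 6: UDUD  (T12,T12)
    · exact (key x y h0xy hnExy (mk2 x y x z h0xy h0xz
        (iff_of_true a1 (htr 1 x y z a1 b1))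
        (iff_of_false (hasym 2 y x a2) (hasym 2 z x (htr 2 z y x b2 a2))))).elim
    -- 7: UDDU  good (left)
    · exact Or.inl ⟨⟨a1, a2⟩, ⟨b2, b1⟩⟩
    -- 8: UDDD  (T12,T1) split on o1 x z
    · rcases htri 1 x z hnxz with c | c
      · exact (key x y h0xy hnExy (mk2 x y x z h0xy h0xz
          (iff_of_true a1 c)
          (iff_of_false (hasym 2 y x a2) (hasym 2 z x (htr 2 z y x b2 a2))))).elim
      · exact (key y z h0yz hnEyz (mk2 y z x z h0yz h0xz
          (iff_of_false (hasym 1 z y b1) (hasym 1 z x c))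
          (iff_of_false (hasym 2 z y b2) (hasym 2 z x (htr 2 z y x b2 a2))))).elim
    -- 9: DUUU
    · exact absurd (h123 y z (all3 h0yz b1 b2)) hnEyz
    -- 10: DUUD good (right)
    · exact Or.inr ⟨⟨a2, a1⟩, ⟨b1, b2⟩⟩
    -- 11: DUDU (T13,T13)
    · exact (key x y h0xy hnExy (mk2 x y x z h0xy h0xz
        (iff_of_false (hasym 1 y x a1) (hasym 1 z x (htr 1 z y x b1 a1)))
        (iff_of_true a2 (htr 2 x y z a2 b2)))).elim
    -- 12: DUDD (T13,T1) split on o2 x z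
    · rcases htri 2 x z hnxz with c | c
      · exact (key x y h0xy hnExy (mk2 x y x z h0xy h0xz
          (iff_of_false (hasym 1 y x a1) (hasym 1 z x (htr 1 z y x b1 a1)))
          (iff_of_true a2 c))).elim
      · exact (key y z h0yz hnEyz (mk2 y z x z h0yz h0xz
          (iff_of_false (hasym 1 z y b1) (hasym 1 z x (htr 1 z y x b1 a1)))
          (iff_of_false (hasym 2 z y b2) (hasym 2 z x c)))).elim
    -- 13: DDUU
    · exact absurd (h123 y z (all3 h0yz b1 b2)) hnEyz
    -- 14: DDUD (T1,T12) split on o1 x z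
    · rcases htri 1 x z hnxz with c | c
      · exact (key y z h0yz hnEyz (mk2 y z x z h0yz h0xz
          (iff_of_true b1 c)
          (iff_of_false (hasym 2 z y b2) (hasym 2 z x (htr 2 z y x b2 a2))))).elim
      · exact (key x y h0xy hnExy (mk2 x y x z h0xy h0xz
          (iff_of_false (hasym 1 y x a1) (hasym 1 z x c))
          (iff_of_false (hasym 2 y x a2) (hasym 2 z x (htr 2 z y x b2 a2))))).elim
    -- 15: DDDU (T1,T13) split on o2 x z
    · rcases htri 2 x z hnxz with c | c
      · exact (key y z h0yz hnEyz (mk2 y z x z h0yz h0xz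
          (iff_of_false (hasym 1 z y b1) (hasym 1 z x (htr 1 z y x b1 a1)))
          (iff_of_true b2 c))).elim
      · exact (key x y h0xy hnExy (mk2 x y x z h0xy h0xz
          (iff_of_false (hasym 1 y x a1) (hasym 1 z x (htr 1 z y x b1 a1)))
          (iff_of_false (hasym 2 y x a2) (hasym 2 z x c)))).elim
    -- 16: DDDD (T1,T1)
    · exact (key x y h0xy hnExy (mk2 x y x z h0xy h0xz
        (iff_of_false (hasym 1 y x a1) (hasym 1 z x (htr 1 z y x b1 a1)))
        (iff_of_false (hasym 2 y x a2) (hasym 2 z x (htr 2 z y x b2 a2))))).elim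
  -- homogeneity for pairs of the same type
  have homPair : ∀ p q p' q' : Γ, o 0 p q → o 0 p' q' → (∀ i, o i p q ↔ o i p' q') →
      ∃ g : Γ ≃ Γ, (∀ i x y, o i x y ↔ o i (g x) (g y)) ∧ g p = p' ∧ g q = q' := by
    intro p q p' q' h0 h0' ht
    have hpq : p ≠ q := hneq 0 p q h0
    have hpq' : p' ≠ q' := hneq 0 p' q' h0'
    set f : Γ → Γ := fun z => if z = p then p' else if z = q then q' else z with hf
    have hfp : f p = p' := by simp [hf]
    have hfq : f q = q' := by simp [hf, Ne.symm hpq]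
    have hrev : ∀ i, o i q p ↔ o i q' p' := by
      intro i
      constructor
      · intro h
        rcases htri i q' p' (Ne.symm hpq') with h' | h'
        · exact h'
        · exact absurd ((ht i).mpr h') (hasym i q p h)
      · intro h
        rcases htri i q p (Ne.symm hpq) with h' | h'
        · exact h'
        · exact absurd ((ht i).mp h') (hasym i q' p' h)
    obtain ⟨g, hg, hga⟩ := hom {p, q} f (by
      intro x hx y hy i
      simp only [Finset.mem_insert, Finset.mem_singleton] at hx hy
      rcases hx with hx | hx <;> rcases hy with hy | hy <;> rw [hx, hy]
      · rw [hfp]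
        exact iff_of_false (hirr i p) (hirr i p')
      · rw [hfp, hfq]
        exact ht i
      · rw [hfq, hfp]
        exact hrev i
      · rw [hfq]
        exact iff_of_false (hirr i q) (hirr i q'))
    refine ⟨g, hg, ?_, ?_⟩
    · rw [hga p (by simp), hfp]
    · rw [hga q (by simp), hfq]
  -- automorphisms preserve E
  have gE : ∀ g : Γ ≃ Γ, (∀ i x y, o i x y ↔ o i (g x) (g y)) →
      ∀ x y, E x y → E (g x) (g y) := by
    intro g hg x y h
    by_cases hxy : x = y
    · subst hxy; exact hE.refl (g x)
    · exact (hdef x y (g x) (g y) hxy (fun he => hxy (g.injective he))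
        (fun i => hg i x y)).mp h
  -- main argument
  intro b' hbb'
  obtain ⟨a₁, a₂, hca1, hca2, h1b, hb2⟩ := hconv
  have hnEa1b : ¬ E a₁ b := fun h => hb (hE.trans hca1 h)
  have hEa1a2 : E a₁ a₂ := hE.trans (hE.symm hca1) hca2
  have hc1 := cross a₁ b a₂ h1b hb2 hEa1a2 hnEa1b
  have hnEcb' : ¬ E c b' := fun h => hb (hE.trans h (hE.symm hbb'))
  have hb'a1 : b' ≠ a₁ := fun h => hnEcb' (hE.trans hca1 (hE.symm (h ▸ hE.refl b' : E b' a₁)))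
  have hb'a2 : b' ≠ a₂ := fun h => hnEcb' (hE.trans hca2 (hE.symm (h ▸ hE.refl b' : E b' a₂)))
  rcases htri 0 b' a₁ hb'a1 with hba1 | ha1b'
  · -- b' is below a₁
    have cross2 := cross b' a₁ b hba1 h1b (hE.symm hbb')
      (fun h => hnEcb' (hE.trans hca1 (hE.symm h)))
    have htype : ∀ i, o i b a₂ ↔ o i b' a₁ := by
      rcases hc1 with ⟨⟨p1, p2⟩, q2, q1⟩ | ⟨⟨p2, p1⟩, q1, q2⟩ <;>
        rcases cross2 with ⟨⟨r1, r2⟩, s2, s1⟩ | ⟨⟨r2, r1⟩, s1, s2⟩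
      · exact absurd s1 (hasym 1 a₁ b p1)
      · exact mk2 b a₂ b' a₁ hb2 hba1
          (iff_of_false (hasym 1 a₂ b q1) (hasym 1 a₁ b' r1))
          (iff_of_true q2 r2)
      · exact mk2 b a₂ b' a₁ hb2 hba1
          (iff_of_true q1 r1)
          (iff_of_false (hasym 2 a₂ b q2) (hasym 2 a₁ b' r2))
      · exact absurd s1 (hasym 1 b a₁ p1)
    obtain ⟨g, hg, hgb, hga2⟩ := homPair b a₂ b' a₁ hb2 hba1 htype
    refine ⟨g a₁, a₁, ?_, hca1, ?_, hba1⟩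
    · have : E (g a₁) (g a₂) := gE g hg a₁ a₂ hEa1a2
      rw [hga2] at this
      exact hE.trans hca1 (hE.symm this)
    · have : o 0 (g a₁) (g b) := (hg 0 a₁ b).mp h1b
      rwa [hgb] at this
  · rcases htri 0 b' a₂ hb'a2 with hb'a2' | ha2b'
    · -- b' between a₁ and a₂
      exact ⟨a₁, a₂, hca1, hca2, ha1b', hb'a2'⟩
    · -- b' is above a₂
      have cross3 := cross b a₂ b' hb2 ha2b' hbb'
        (fun h => hb (hE.trans hca2 (hE.symm h)))
      have htype : ∀ i, o i a₁ b ↔ o i a₂ b' := by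
        rcases hc1 with ⟨⟨p1, p2⟩, q2, q1⟩ | ⟨⟨p2, p1⟩, q1, q2⟩ <;>
          rcases cross3 with ⟨⟨r1, r2⟩, s2, s1⟩ | ⟨⟨r2, r1⟩, s1, s2⟩
        · exact absurd r1 (hasym 1 a₂ b q1)
        · exact mk2 a₁ b a₂ b' h1b ha2b'
            (iff_of_true p1 s1)
            (iff_of_false (hasym 2 b a₁ p2) (hasym 2 b' a₂ s2))
        · exact mk2 a₁ b a₂ b' h1b ha2b'
            (iff_of_false (hasym 1 b a₁ p1) (hasym 1 b' a₂ s1))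
            (iff_of_true p2 s2)
        · exact absurd r1 (hasym 1 b a₂ q1)
      obtain ⟨g, hg, hga1, hgb⟩ := homPair a₁ b a₂ b' h1b ha2b' htype
      refine ⟨a₂, g a₂, hca2, ?_, ha2b', ?_⟩
      · have : E (g a₁) (g a₂) := gE g hg a₁ a₂ hEa1a2
        rw [hga1] at this
        exact hE.trans hca2 this
      · have : o 0 (g b) (g a₂) := (hg 0 b a₂).mp hb2
        rwa [hgb] at this
end

section
/- Let Γ be a homogeneous 3-dimensional permutation structure with minimal non-trivial ∅-definable equivalence relation E containing →123. Then every non-trivial ∅-definable equivalence relation on Γ contains E. -/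
/-- In a homogeneous 3-dimensional permutation structure with
minimal non-trivial ∅-definable equivalence relation `E` containing `→123`,
every non-trivial ∅-definable equivalence relation `E'` (a union of 2-types)
contains `E`. -/
theorem stmt13 {Γ : Type*} (o : Fin 3 → Γ → Γ → Prop)
    (ho : ∀ i, IsStrictTotalOrder Γ (o i))
    (hom : ∀ (A : Finset Γ) (f : Γ → Γ),
      (∀ a ∈ A, ∀ b ∈ A, ∀ i, o i a b ↔ o i (f a) (f b)) →
      ∃ g : Γ ≃ Γ, (∀ i x y, o i x y ↔ o i (g x) (g y)) ∧ ∀ a ∈ A, g a = f a)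
    (E : Γ → Γ → Prop) (hE : Equivalence E)
    (hdef : ∀ x y x' y' : Γ, x ≠ y → x' ≠ y' →
      (∀ i, o i x y ↔ o i x' y') → (E x y ↔ E x' y'))
    (hnontriv : (∃ x y, x ≠ y ∧ E x y) ∧ (∃ x y, ¬ E x y))
    (hmin : ∀ E' : Γ → Γ → Prop, Equivalence E' →
      (∀ x y x' y' : Γ, x ≠ y → x' ≠ y' →
        (∀ i, o i x y ↔ o i x' y') → (E' x y ↔ E' x' y')) →
      (∃ x y, x ≠ y ∧ E' x y) → (∀ x y, E' x y → E x y) →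
      ∀ x y, E' x y ↔ E x y)
    (h123 : ∀ x y, (∀ i, o i x y) → E x y) :
    ∀ E' : Γ → Γ → Prop, Equivalence E' →
      (∀ x y x' y' : Γ, x ≠ y → x' ≠ y' →
        (∀ i, o i x y ↔ o i x' y') → (E' x y ↔ E' x' y')) →
      (∃ x y, x ≠ y ∧ E' x y) → (∃ x y, ¬ E' x y) →
      ∀ x y, E x y → E' x y := by
  classical
  intro E' hE' hdef' hpair _hnonfull
  -- basic order facts
  have htrans : ∀ (i : Fin 3) (x y z : Γ), o i x y → o i y z → o i x z := by
    intro i x y z h h'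
    haveI := ho i
    exact trans_of (o i) h h'
  have hirr : ∀ (i : Fin 3) (x : Γ), ¬ o i x x := by
    intro i x
    haveI := ho i
    exact irrefl_of (o i) x
  have hasymm : ∀ (i : Fin 3) (x y : Γ), o i x y → o i y x → False := by
    intro i x y h h'
    exact hirr i x (htrans i x y x h h')
  have htot : ∀ (i : Fin 3) (x y : Γ), x ≠ y → ¬ o i x y → o i y x := by
    intro i x y hxy h
    haveI := ho i
    rcases trichotomous_of (o i) x y with hh | hh | hh
    · exact absurd hh h
    · exact absurd hh hxy
    · exact hh
  have hneg : ∀ (i : Fin 3) (x y : Γ), x ≠ y → (¬ o i x y ↔ o i y x) := by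
    intro i x y hxy
    constructor
    · exact htot i x y hxy
    · intro h hh
      exact hasymm i x y hh h
  obtain ⟨u, v, huv, hEuv⟩ := hnontriv.1
  obtain ⟨a, b, hab, hE'ab⟩ := hpair
  -- Key step: produce a pair which is both in E and in E'.
  have key : ∃ x y, x ≠ y ∧ E x y ∧ E' x y := by
    by_cases hEab : E a b
    · exact ⟨a, b, hab, hEab, hE'ab⟩
    -- core construction: if the type of (a,b) differs from the type of an
    -- E-pair (p,q) in exactly one coordinate j, we get a common pair.
    have core : ∀ p q : Γ, p ≠ q → E p q → ∀ j : Fin 3,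
        (∀ i, i ≠ j → (o i a b ↔ o i p q)) → ¬ (o j a b ↔ o j p q) →
        ∃ x y, x ≠ y ∧ E x y ∧ E' x y := by
      intro p q hpq hEpq j hagree hdis
      -- realize the type of (p,q) at b : get c with tp(b,c) = tp(p,q)
      obtain ⟨g, hg, hgA⟩ := hom {p} (fun _ => b) (by
        intro x hx y hy i
        rw [Finset.mem_singleton] at hx hy
        rw [hx, hy]
        exact iff_of_false (hirr i p) (hirr i b))
      have hgp : g p = b := hgA p (Finset.mem_singleton_self p)
      set c := g q with hc
      have hbc_pat : ∀ i, o i p q ↔ o i b c := by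
        intro i
        rw [← hgp]
        exact hg i p q
      have hbc : b ≠ c := by
        rw [← hgp]
        intro h
        exact hpq (g.injective h)
      have hEbc : E b c := (hdef p q b c hpq hbc hbc_pat).mp hEpq
      -- a ≠ c
      obtain ⟨i0, hi0⟩ : ∃ i : Fin 3, i ≠ j := by
        by_cases h : j = 0
        · exact ⟨1, by subst h; decide⟩
        · exact ⟨0, fun hh => h hh.symm⟩
      have hac : a ≠ c := by
        intro h
        have h1 : o i0 a b ↔ o i0 p q := hagree i0 hi0
        have h2 : o i0 p q ↔ o i0 b a := by
          have h2' := hbc_pat i0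
          rw [← h] at h2'
          exact h2'
        rcases Classical.em (o i0 a b) with hh | hh
        · exact hasymm i0 a b hh (h2.mp (h1.mp hh))
        · have hba : o i0 b a := htot i0 a b hab hh
          exact hh (h1.mpr (h2.mpr hba))
      -- on coordinates other than j, tp(a,c) agrees with tp(a,b)
      have hagree_ac : ∀ i, i ≠ j → (o i a c ↔ o i a b) := by
        intro i hi
        have h1 : o i a b ↔ o i b c := (hagree i hi).trans (hbc_pat i)
        constructor
        · intro h
          by_contra hnab
          have hba : o i b a := htot i a b hab hnab
          have hnbc : ¬ o i b c := fun hh => hnab (h1.mpr hh)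
          have hcb : o i c b := htot i b c hbc hnbc
          exact hasymm i a c h (htrans i c b a hcb hba)
        · intro h
          exact htrans i a b c h (h1.mp h)
      by_cases hj : o j a c ↔ o j a b
      · -- tp(a,c) = tp(a,b), so E' a c, hence E' b c; with E b c: common pair
        have hall : ∀ i, o i a b ↔ o i a c := by
          intro i
          by_cases hi : i = j
          · subst hi; exact hj.symm
          · exact (hagree_ac i hi).symm
        have hE'ac : E' a c := (hdef' a b a c hab hac hall).mp hE'ab
        exact ⟨b, c, hbc, hEbc, hE'.trans (hE'.symm hE'ab) hE'ac⟩
      · -- otherwise tp(a,c) = tp(p,q), so E a c, hence E a b: contradiction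
        have hall : ∀ i, o i p q ↔ o i a c := by
          intro i
          by_cases hi : i = j
          · subst hi
            tauto
          · exact ((hagree i hi).symm.trans (hagree_ac i hi).symm)
        have hEac : E a c := (hdef p q a c hpq hac hall).mp hEpq
        exact absurd (hE.trans hEac (hE.symm hEbc)) hEab
    -- now case analysis on how tp(a,b) compares with tp(u,v)
    have not_all : ¬ (∀ i, o i a b ↔ o i u v) := fun h =>
      hEab ((hdef a b u v hab huv h).mpr hEuv)
    have not_none : ¬ (∀ i, ¬ (o i a b ↔ o i u v)) := by
      intro h
      have h' : ∀ i, o i a b ↔ o i v u := by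
        intro i
        have h1 := h i
        have h2 := hneg i u v huv
        have h3 := hneg i a b hab
        tauto
      exact hEab ((hdef a b v u hab (Ne.symm huv) h').mpr (hE.symm hEuv))
    have flip : ∀ i, ¬ (o i a b ↔ o i u v) → (o i a b ↔ o i v u) := by
      intro i hi
      have h2 := hneg i u v huv
      tauto
    have flip2 : ∀ i, (o i a b ↔ o i u v) → ¬ (o i a b ↔ o i v u) := by
      intro i hi
      have h2 := hneg i u v huv
      tauto
    have hvu : v ≠ u := Ne.symm huv
    have hEvu : E v u := hE.symm hEuv
    by_cases h0 : o 0 a b ↔ o 0 u v <;>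
      by_cases h1 : o 1 a b ↔ o 1 u v <;>
        by_cases h2 : o 2 a b ↔ o 2 u v
    · exact absurd (by intro i; fin_cases i <;> assumption) not_all
    · exact core u v huv hEuv 2
        (by intro i hi; fin_cases i
            · exact h0
            · exact h1
            · exact absurd rfl hi) h2
    · exact core u v huv hEuv 1
        (by intro i hi; fin_cases i
            · exact h0
            · exact absurd rfl hi
            · exact h2) h1
    · exact core v u hvu hEvu 0
        (by intro i hi; fin_cases i
            · exact absurd rfl hi
            · exact flip 1 h1
            · exact flip 2 h2) (flip2 0 h0)
    · exact core u v huv hEuv 0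
        (by intro i hi; fin_cases i
            · exact absurd rfl hi
            · exact h1
            · exact h2) h0
    · exact core v u hvu hEvu 1
        (by intro i hi; fin_cases i
            · exact flip 0 h0
            · exact absurd rfl hi
            · exact flip 2 h2) (flip2 1 h1)
    · exact core v u hvu hEvu 2
        (by intro i hi; fin_cases i
            · exact flip 0 h0
            · exact flip 1 h1
            · exact absurd rfl hi) (flip2 2 h2)
    · exact absurd (by intro i; fin_cases i <;> assumption) not_none
  -- finish by minimality applied to E ⊓ E'
  obtain ⟨x₀, y₀, hne₀, hEx₀, hE'x₀⟩ := key
  have hmain := hmin (fun x y => E x y ∧ E' x y)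
    ⟨fun x => ⟨hE.refl x, hE'.refl x⟩,
     fun h => ⟨hE.symm h.1, hE'.symm h.2⟩,
     fun h h' => ⟨hE.trans h.1 h'.1, hE'.trans h.2 h'.2⟩⟩
    (fun x y x' y' hxy hx'y' hiff =>
      and_congr (hdef x y x' y' hxy hx'y' hiff) (hdef' x y x' y' hxy hx'y' hiff))
    ⟨x₀, y₀, hne₀, hEx₀, hE'x₀⟩
    (fun _ _ h => h.1)
  intro x y hxy
  exact ((hmain x y).mpr hxy).2
end

section
/- Let Λ be a finite distributive lattice, E ∈ Λ meet-irreducible with E < F in Λ. Let A* be the class of finite structures (A, d, <_E) where (A,d) is a Λ-ultrametric space and <_E is a subquotient order from the relation E (i.e. d ≤ E) to the relation F (d ≤ F). Then A* has the amalgamation property: every two-point amalgamation problem A₀ ⊆ A₁ = A₀ ∪ {a₁}, A₂ = A₀ ∪ {a₂} in A* has a solution in A*. -/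
/-- `d` is a `Λ`-ultrametric on `A`. -/
def IsUltra {Λ A : Type*} [Lattice Λ] [OrderBot Λ] (d : A → A → Λ) : Prop :=
  (∀ x y, d x y = d y x) ∧ (∀ x y, d x y = ⊥ ↔ x = y) ∧
    (∀ x y z, d x z ≤ d x y ⊔ d y z)

/-- `lt` is (the pullback to `A` of) a subquotient order from the relation
`d ≤ E` to the relation `d ≤ F`. -/
def IsSQO {Λ A : Type*} [Lattice Λ] [OrderBot Λ] (E F : Λ)
    (d : A → A → Λ) (lt : A → A → Prop) : Prop :=
  (∀ a b, lt a b → d a b ≤ F ∧ ¬ d a b ≤ E) ∧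
  (∀ a b c, lt a b → lt b c → lt a c) ∧
  (∀ a b, lt a b → ¬ lt b a) ∧
  (∀ a a' b b', d a a' ≤ E → d b b' ≤ E → lt a b → lt a' b') ∧
  (∀ a b, d a b ≤ F → ¬ d a b ≤ E → lt a b ∨ lt b a)

/-- Amalgamated distance on `A₀ ⊕ Bool` (`true` ↦ new point of side 1,
`false` ↦ new point of side 2). -/
def AD {Λ A₀ : Type*} (d₁ d₂ : (A₀ ⊕ Unit) → (A₀ ⊕ Unit) → Λ) (bot r : Λ) :
    (A₀ ⊕ Bool) → (A₀ ⊕ Bool) → Λ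
  | .inl a, .inl b => d₁ (.inl a) (.inl b)
  | .inl a, .inr true => d₁ (.inl a) (.inr ())
  | .inl a, .inr false => d₂ (.inl a) (.inr ())
  | .inr true, .inl a => d₁ (.inl a) (.inr ())
  | .inr false, .inl a => d₂ (.inl a) (.inr ())
  | .inr true, .inr true => bot
  | .inr false, .inr false => bot
  | .inr true, .inr false => r
  | .inr false, .inr true => r

/-- Amalgamated order on `A₀ ⊕ Bool`. -/
def AL {A₀ : Type*} (lt₁ lt₂ : (A₀ ⊕ Unit) → (A₀ ⊕ Unit) → Prop) (L12 L21 : Prop) :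
    (A₀ ⊕ Bool) → (A₀ ⊕ Bool) → Prop
  | .inl a, .inl b => lt₁ (.inl a) (.inl b)
  | .inl a, .inr true => lt₁ (.inl a) (.inr ())
  | .inl a, .inr false => lt₂ (.inl a) (.inr ())
  | .inr true, .inl a => lt₁ (.inr ()) (.inl a)
  | .inr false, .inl a => lt₂ (.inr ()) (.inl a)
  | .inr true, .inr true => False
  | .inr false, .inr false => False
  | .inr true, .inr false => L12
  | .inr false, .inr true => L21

theorem sqo_transport {Λ B C : Type*} [Lattice Λ] [OrderBot Λ] (E F : Λ) (e : C ≃ B)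
    (d : C → C → Λ) (lt : C → C → Prop) (hu : IsUltra d) (hs : IsSQO E F d lt) :
    IsUltra (fun x y => d (e.symm x) (e.symm y)) ∧
    IsSQO E F (fun x y => d (e.symm x) (e.symm y)) (fun x y => lt (e.symm x) (e.symm y)) := by
  obtain ⟨sy, de, tr⟩ := hu
  obtain ⟨ho, ht, ha, hc, htot⟩ := hs
  refine ⟨⟨fun x y => sy _ _, fun x y => ?_, fun x y z => tr _ _ _⟩,
    fun a b h => ho _ _ h, fun a b c h h' => ht _ _ _ h h', fun x y h => ha _ _ h,
    fun x x' y y' h h' h'' => hc _ _ _ _ h h' h'', fun x y h h' => htot _ _ h h'⟩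
  rw [de]
  exact e.symm.injective.eq_iff

theorem stmt14 {Λ A₀ : Type*} [DistribLattice Λ] [BoundedOrder Λ] [Fintype Λ]
    [Fintype A₀]
    (E F : Λ) (hEF : E < F)
    (hirr : ∀ x y : Λ, E = x ⊓ y → E = x ∨ E = y)
    (d₁ d₂ : (A₀ ⊕ Unit) → (A₀ ⊕ Unit) → Λ)
    (lt₁ lt₂ : (A₀ ⊕ Unit) → (A₀ ⊕ Unit) → Prop)
    (h₁ : IsUltra d₁ ∧ IsSQO E F d₁ lt₁)
    (h₂ : IsUltra d₂ ∧ IsSQO E F d₂ lt₂)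
    (hagree_d : ∀ a b : A₀, d₁ (Sum.inl a) (Sum.inl b) = d₂ (Sum.inl a) (Sum.inl b))
    (hagree_lt : ∀ a b : A₀, lt₁ (Sum.inl a) (Sum.inl b) ↔ lt₂ (Sum.inl a) (Sum.inl b)) :
    ∃ (B : Type) (_ : Fintype B) (d : B → B → Λ) (lt : B → B → Prop)
      (f₁ f₂ : (A₀ ⊕ Unit) → B),
      IsUltra d ∧ IsSQO E F d lt ∧
      (∀ x y, d (f₁ x) (f₁ y) = d₁ x y) ∧
      (∀ x y, lt (f₁ x) (f₁ y) ↔ lt₁ x y) ∧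
      (∀ x y, d (f₂ x) (f₂ y) = d₂ x y) ∧
      (∀ x y, lt (f₂ x) (f₂ y) ↔ lt₂ x y) ∧
      (∀ a : A₀, f₁ (Sum.inl a) = f₂ (Sum.inl a)) := by
  classical
  have H1 := h₁
  have H2 := h₂
  obtain ⟨⟨sy₁, de₁, tr₁⟩, o₁, t₁, as₁, c₁, tot₁⟩ := h₁
  obtain ⟨⟨sy₂, de₂, tr₂⟩, o₂, t₂, as₂, c₂, tot₂⟩ := h₂
  set u : A₀ ⊕ Unit := Sum.inr () with hu
  have hEF' : E ≤ F := hEF.le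
  have bE₁ : ∀ x, d₁ x x ≤ E := fun x => ((de₁ x x).mpr rfl).le.trans bot_le
  have bE₂ : ∀ x, d₂ x x ≤ E := fun x => ((de₂ x x).mpr rfl).le.trans bot_le
  have irr₁ : ∀ x, ¬ lt₁ x x := fun x h => (o₁ x x h).2 (bE₁ x)
  have irr₂ : ∀ x, ¬ lt₂ x x := fun x h => (o₂ x x h).2 (bE₂ x)
  have c₁l : ∀ x x' y, d₁ x x' ≤ E → lt₁ x y → lt₁ x' y :=
    fun x x' y h h' => c₁ x x' y y h (bE₁ y) h'
  have c₁r : ∀ x y y', d₁ y y' ≤ E → lt₁ x y → lt₁ x y' :=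
    fun x y y' h h' => c₁ x x y y' (bE₁ x) h h'
  have c₂l : ∀ x x' y, d₂ x x' ≤ E → lt₂ x y → lt₂ x' y :=
    fun x x' y h h' => c₂ x x' y y h (bE₂ y) h'
  have c₂r : ∀ x y y', d₂ y y' ≤ E → lt₂ x y → lt₂ x y' :=
    fun x y y' h h' => c₂ x x y y' (bE₂ x) h h'
  -- meet-irreducible implies meet-prime
  have hprime : ∀ x y : Λ, x ⊓ y ≤ E → x ≤ E ∨ y ≤ E := by
    intro x y h
    have h2 : E = (E ⊔ x) ⊓ (E ⊔ y) := ((sup_eq_left.mpr h).symm).trans (sup_inf_left E x y)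
    rcases hirr _ _ h2 with h3 | h3
    · exact Or.inl (sup_eq_left.mp h3.symm)
    · exact Or.inr (sup_eq_left.mp h3.symm)
  have primeInf : ∀ (f : A₀ → Λ) (s : Finset A₀), s.inf f ≤ E → ∃ a ∈ s, f a ≤ E := by
    intro f s
    induction s using Finset.induction_on with
    | empty =>
      intro h
      rw [Finset.inf_empty] at h
      exact absurd (le_top.trans h) hEF.not_ge
    | @insert a s ha ih =>
      intro h
      rw [Finset.inf_insert] at h
      rcases hprime _ _ h with h' | h'
      · exact ⟨a, Finset.mem_insert_self _ _, h'⟩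
      · obtain ⟨b, hb, hb'⟩ := ih h'
        exact ⟨b, Finset.mem_insert_of_mem hb, hb'⟩
  -- the precanonical amalgamated distance
  obtain ⟨r, hrdef⟩ :
      ∃ r : Λ, r = Finset.univ.inf (fun a : A₀ => d₁ (Sum.inl a) u ⊔ d₂ (Sum.inl a) u) :=
    ⟨_, rfl⟩
  have hrle : ∀ a : A₀, r ≤ d₁ (Sum.inl a) u ⊔ d₂ (Sum.inl a) u := by
    intro a; rw [hrdef]; exact Finset.inf_le (Finset.mem_univ a)
  have hrE : r ≤ E → ∃ c : A₀, d₁ (Sum.inl c) u ≤ E ∧ d₂ (Sum.inl c) u ≤ E := by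
    intro h
    rw [hrdef] at h
    obtain ⟨c, _, hc⟩ := primeInf _ _ h
    exact ⟨c, le_trans le_sup_left hc, le_trans le_sup_right hc⟩
  have tri12 : ∀ a : A₀, d₁ (Sum.inl a) u ≤ r ⊔ d₂ (Sum.inl a) u := by
    intro a
    rw [hrdef, Finset.inf_sup_distrib_right]
    refine Finset.le_inf fun c _ => ?_
    have h1 : d₁ (Sum.inl a) u ≤ d₁ (Sum.inl a) (Sum.inl c) ⊔ d₁ (Sum.inl c) u := tr₁ _ _ _
    have h2 : d₁ (Sum.inl a) (Sum.inl c) ≤ d₂ (Sum.inl a) u ⊔ d₂ (Sum.inl c) u := by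
      rw [hagree_d]
      calc d₂ (Sum.inl a) (Sum.inl c) ≤ d₂ (Sum.inl a) u ⊔ d₂ u (Sum.inl c) := tr₂ _ _ _
        _ = d₂ (Sum.inl a) u ⊔ d₂ (Sum.inl c) u := by rw [sy₂ u]
    exact h1.trans (sup_le (h2.trans (sup_le le_sup_right (le_sup_right.trans le_sup_left)))
      (le_sup_left.trans le_sup_left))
  have tri21 : ∀ a : A₀, d₂ (Sum.inl a) u ≤ r ⊔ d₁ (Sum.inl a) u := by
    intro a
    rw [hrdef, Finset.inf_sup_distrib_right]
    refine Finset.le_inf fun c _ => ?_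
    have h1 : d₂ (Sum.inl a) u ≤ d₂ (Sum.inl a) (Sum.inl c) ⊔ d₂ (Sum.inl c) u := tr₂ _ _ _
    have h2 : d₂ (Sum.inl a) (Sum.inl c) ≤ d₁ (Sum.inl a) u ⊔ d₁ (Sum.inl c) u := by
      rw [← hagree_d]
      calc d₁ (Sum.inl a) (Sum.inl c) ≤ d₁ (Sum.inl a) u ⊔ d₁ u (Sum.inl c) := tr₁ _ _ _
        _ = d₁ (Sum.inl a) u ⊔ d₁ (Sum.inl c) u := by rw [sy₁ u]
    exact h1.trans (sup_le (h2.trans (sup_le le_sup_right (le_sup_left.trans le_sup_left)))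
      (le_sup_right.trans le_sup_left))
  -- consistency of the orders when r ≤ E
  have consL : r ≤ E → ∀ x : A₀,
      (lt₁ u (Sum.inl x) ↔ lt₂ u (Sum.inl x)) ∧ (lt₁ (Sum.inl x) u ↔ lt₂ (Sum.inl x) u) := by
    intro h x
    obtain ⟨c, hc1, hc2⟩ := hrE h
    have hc1' : d₁ u (Sum.inl c) ≤ E := le_of_eq_of_le (sy₁ u (Sum.inl c)) hc1
    have hc2' : d₂ u (Sum.inl c) ≤ E := le_of_eq_of_le (sy₂ u (Sum.inl c)) hc2
    constructor
    · constructor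
      · intro hl
        exact c₂l _ _ _ hc2 ((hagree_lt c x).mp (c₁l _ _ _ hc1' hl))
      · intro hl
        exact c₁l _ _ _ hc1 ((hagree_lt c x).mpr (c₂l _ _ _ hc2' hl))
    · constructor
      · intro hl
        exact c₂r _ _ _ hc2 ((hagree_lt x c).mp (c₁r _ _ _ hc1' hl))
      · intro hl
        exact c₁r _ _ _ hc1 ((hagree_lt x c).mpr (c₂r _ _ _ hc2' hl))
  have notrE₁ : ∀ x : A₀, lt₁ u (Sum.inl x) → lt₂ (Sum.inl x) u → ¬ r ≤ E :=
    fun x h h' hr => as₂ _ _ ((consL hr x).1.mp h) h'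
  have notrE₂ : ∀ x : A₀, lt₂ u (Sum.inl x) → lt₁ (Sum.inl x) u → ¬ r ≤ E :=
    fun x h h' hr => as₂ _ _ h ((consL hr x).2.mp h')
  have mkrF : ∀ x : A₀, d₁ (Sum.inl x) u ≤ F → d₂ (Sum.inl x) u ≤ F → r ≤ F :=
    fun x h h' => (hrle x).trans (sup_le h h')
  -- the auxiliary one-step relations P12 / P21
  obtain ⟨P12, hP12⟩ : ∃ p : Prop, p ↔ ∃ c : A₀,
      (d₁ u (Sum.inl c) ≤ E ∨ lt₁ u (Sum.inl c)) ∧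
      (d₂ (Sum.inl c) u ≤ E ∨ lt₂ (Sum.inl c) u) := ⟨_, Iff.rfl⟩
  obtain ⟨P21, hP21⟩ : ∃ p : Prop, p ↔ ∃ c : A₀,
      (d₂ u (Sum.inl c) ≤ E ∨ lt₂ u (Sum.inl c)) ∧
      (d₁ (Sum.inl c) u ≤ E ∨ lt₁ (Sum.inl c) u) := ⟨_, Iff.rfl⟩
  have lemA : P12 → ∀ x : A₀, lt₂ u (Sum.inl x) →
      (d₁ (Sum.inl x) u ≤ E ∨ lt₁ (Sum.inl x) u) → False := by
    intro hP x hl hp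
    obtain ⟨c, hc1, hc2⟩ := hP12.mp hP
    have h3 : lt₂ (Sum.inl c) (Sum.inl x) := by
      rcases hc2 with h | h
      · exact c₂l _ _ _ (le_of_eq_of_le (sy₂ u (Sum.inl c)) h) hl
      · exact t₂ _ _ _ h hl
    have h5 : lt₁ (Sum.inl c) u := by
      rcases hp with h | h
      · exact c₁r _ _ _ h ((hagree_lt c x).mpr h3)
      · exact t₁ _ _ _ ((hagree_lt c x).mpr h3) h
    rcases hc1 with h | h
    · exact (o₁ _ _ h5).2 (le_of_eq_of_le (sy₁ (Sum.inl c) u) h)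
    · exact as₁ _ _ h h5
  have lemB : P12 → ∀ x : A₀, lt₁ (Sum.inl x) u →
      (d₂ u (Sum.inl x) ≤ E ∨ lt₂ u (Sum.inl x)) → False := by
    intro hP x hl hp
    obtain ⟨c, hc1, hc2⟩ := hP12.mp hP
    have h3 : lt₁ (Sum.inl x) (Sum.inl c) := by
      rcases hc1 with h | h
      · exact c₁r _ _ _ h hl
      · exact t₁ _ _ _ hl h
    have h5 : lt₂ (Sum.inl x) u := by
      rcases hc2 with h | h
      · exact c₂r _ _ _ h ((hagree_lt x c).mp h3)
      · exact t₂ _ _ _ ((hagree_lt x c).mp h3) h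
    rcases hp with h | h
    · exact (o₂ _ _ h5).2 (le_of_eq_of_le (sy₂ (Sum.inl x) u) h)
    · exact as₂ _ _ h h5
  by_cases hbot : r = ⊥
  · -- the two new points coincide
    have dlem : ∀ a : A₀, d₁ (Sum.inl a) u = d₂ (Sum.inl a) u := by
      intro a
      refine le_antisymm ?_ ?_
      · have := tri12 a; rwa [hbot, bot_sup_eq] at this
      · have := tri21 a; rwa [hbot, bot_sup_eq] at this
    have dEq : ∀ x y, d₁ x y = d₂ x y := by
      rintro (a | ⟨⟩) (b | ⟨⟩)
      · exact hagree_d a b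
      · exact dlem a
      · rw [sy₁, sy₂]; exact dlem b
      · rw [(de₁ u u).mpr rfl, (de₂ u u).mpr rfl]
    have hrEbot : r ≤ E := hbot.le.trans bot_le
    have ltEq : ∀ x y, lt₁ x y ↔ lt₂ x y := by
      rintro (a | ⟨⟩) (b | ⟨⟩)
      · exact hagree_lt a b
      · exact (consL hrEbot a).2
      · exact (consL hrEbot b).1
      · exact ⟨fun h => absurd h (irr₁ u), fun h => absurd h (irr₂ u)⟩
    obtain ⟨n, e⟩ : Σ n : ℕ, ((A₀ ⊕ Unit) ≃ Fin n) := ⟨_, Fintype.equivFin _⟩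
    obtain ⟨hU, hS⟩ := sqo_transport E F e d₁ lt₁ H1.1 H1.2
    refine ⟨Fin n, inferInstance,
      fun x y => d₁ (e.symm x) (e.symm y), fun x y => lt₁ (e.symm x) (e.symm y),
      ⇑e, ⇑e, hU, hS, ?_, ?_, ?_, ?_, fun a => rfl⟩
    · intro x y; simp only [Equiv.symm_apply_apply]
    · intro x y; simp only [Equiv.symm_apply_apply]
    · intro x y; simp only [Equiv.symm_apply_apply]; exact dEq x y
    · intro x y; simp only [Equiv.symm_apply_apply]; exact ltEq x y
  · -- r ≠ ⊥ : genuine two-point extension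
    obtain ⟨L12, hL12⟩ : ∃ p : Prop, p ↔ (r ≤ F ∧ ¬ r ≤ E ∧ (P12 ∨ ¬ P21)) := ⟨_, Iff.rfl⟩
    obtain ⟨L21, hL21⟩ : ∃ p : Prop, p ↔ (r ≤ F ∧ ¬ r ≤ E ∧ (¬ P12 ∧ P21)) := ⟨_, Iff.rfl⟩
    have symB : ∀ x y, AD d₁ d₂ (⊥:Λ) r x y = AD d₁ d₂ (⊥:Λ) r y x := by
      rintro (a | (_|_)) (b | (_|_)) <;> simp only [AD] <;> first | rfl | exact sy₁ _ _
    have eqB : ∀ x y, AD d₁ d₂ (⊥:Λ) r x y = ⊥ ↔ x = y := by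
      rintro (a | (_|_)) (b | (_|_)) <;> simp only [AD] <;>
        simp [de₁, de₂, hbot]
    have triB : ∀ x y z,
        AD d₁ d₂ (⊥:Λ) r x z ≤ AD d₁ d₂ (⊥:Λ) r x y ⊔ AD d₁ d₂ (⊥:Λ) r y z := by
      rintro (a | (_|_)) (b | (_|_)) (c | (_|_)) <;> simp only [AD]
      · exact tr₁ _ _ _
      · rw [hagree_d a b]; exact tr₂ _ _ _
      · exact tr₁ _ _ _
      · rw [hagree_d]
        have := tr₂ (Sum.inl a) u (Sum.inl c)
        rwa [sy₂ u (Sum.inl c)] at this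
      · exact le_sup_left
      · exact (tri12 a).trans (sup_comm r _).le
      · have := tr₁ (Sum.inl a) u (Sum.inl c)
        rwa [sy₁ u (Sum.inl c)] at this
      · exact (tri21 a).trans (sup_comm r _).le
      · exact le_sup_left
      · refine (tr₂ (Sum.inl c) (Sum.inl b) u).trans (sup_le ?_ le_sup_left)
        rw [sy₂ (Sum.inl c) (Sum.inl b), ← hagree_d]
        exact le_sup_right
      · exact bot_le
      · exact (hrle b).trans (sup_comm _ _).le
      · exact le_sup_right
      · exact bot_le
      · exact le_sup_right
      · exact tri21 c
      · exact bot_le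
      · exact le_sup_left
      · refine (tr₁ (Sum.inl c) (Sum.inl b) u).trans (sup_le ?_ le_sup_left)
        rw [sy₁ (Sum.inl c) (Sum.inl b)]
        exact le_sup_right
      · exact hrle b
      · exact bot_le
      · exact tri12 c
      · exact le_sup_left
      · exact bot_le
      · exact le_sup_right
      · exact le_sup_right
      · exact bot_le
    have oB : ∀ x y, AL lt₁ lt₂ L12 L21 x y →
        AD d₁ d₂ (⊥:Λ) r x y ≤ F ∧ ¬ AD d₁ d₂ (⊥:Λ) r x y ≤ E := by
      rintro (a | (_|_)) (b | (_|_)) <;> simp only [AD, AL]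
      · exact o₁ _ _
      · exact o₂ _ _
      · exact o₁ _ _
      · intro h; have := o₂ _ _ h; rwa [sy₂ u (Sum.inl b)] at this
      · exact fun h => h.elim
      · intro h; obtain ⟨h1, h2, _⟩ := hL21.mp h; exact ⟨h1, h2⟩
      · intro h; have := o₁ _ _ h; rwa [sy₁ u (Sum.inl b)] at this
      · intro h; obtain ⟨h1, h2, _⟩ := hL12.mp h; exact ⟨h1, h2⟩
      · exact fun h => h.elim
    have asB : ∀ x y, AL lt₁ lt₂ L12 L21 x y → ¬ AL lt₁ lt₂ L12 L21 y x := by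
      rintro (a | (_|_)) (b | (_|_)) <;> simp only [AL]
      · exact as₁ _ _
      · exact as₂ _ _
      · exact as₁ _ _
      · exact as₂ _ _
      · exact fun h => h.elim
      · intro h h'
        obtain ⟨_, _, h3, h4⟩ := hL21.mp h
        obtain ⟨_, _, h5⟩ := hL12.mp h'
        exact h5.elim h3 fun hn => hn h4
      · exact as₁ _ _
      · intro h h'
        obtain ⟨_, _, h3⟩ := hL12.mp h
        obtain ⟨_, _, h4, h5⟩ := hL21.mp h'
        exact h3.elim h4 fun hn => hn h5
      · exact fun h => h.elim
    have totB : ∀ x y, AD d₁ d₂ (⊥:Λ) r x y ≤ F → ¬ AD d₁ d₂ (⊥:Λ) r x y ≤ E →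
        AL lt₁ lt₂ L12 L21 x y ∨ AL lt₁ lt₂ L12 L21 y x := by
      rintro (a | (_|_)) (b | (_|_)) <;> simp only [AD, AL]
      · exact tot₁ _ _
      · exact tot₂ _ _
      · exact tot₁ _ _
      · intro h h'
        rcases tot₂ u (Sum.inl b) (by rwa [sy₂ u (Sum.inl b)]) (by rw [sy₂ u (Sum.inl b)]; exact h') with hh | hh
        · exact Or.inl hh
        · exact Or.inr hh
      · intro _ h'; exact absurd bot_le h'
      · intro h h'
        by_cases hp : P12 ∨ ¬ P21
        · exact Or.inr (hL12.mpr ⟨h, h', hp⟩)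
        · rcases not_or.mp hp with ⟨h1, h2⟩
          exact Or.inl (hL21.mpr ⟨h, h', h1, not_not.mp h2⟩)
      · intro h h'
        rcases tot₁ u (Sum.inl b) (by rwa [sy₁ u (Sum.inl b)]) (by rw [sy₁ u (Sum.inl b)]; exact h') with hh | hh
        · exact Or.inl hh
        · exact Or.inr hh
      · intro h h'
        by_cases hp : P12 ∨ ¬ P21
        · exact Or.inl (hL12.mpr ⟨h, h', hp⟩)
        · rcases not_or.mp hp with ⟨h1, h2⟩
          exact Or.inr (hL21.mpr ⟨h, h', h1, not_not.mp h2⟩)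
      · intro _ h'; exact absurd bot_le h'
    have transB : ∀ x y z, AL lt₁ lt₂ L12 L21 x y → AL lt₁ lt₂ L12 L21 y z →
        AL lt₁ lt₂ L12 L21 x z := by
      rintro (a | (_|_)) (b | (_|_)) (c | (_|_)) <;> simp only [AL]
      -- (l,l,l)
      · exact t₁ _ _ _
      -- (l,l,f)
      · exact fun h h' => t₂ _ _ _ ((hagree_lt _ _).mp h) h'
      -- (l,l,t)
      · exact t₁ _ _ _
      -- (l,f,l)
      · exact fun h h' => (hagree_lt _ _).mpr (t₂ _ _ _ h h')
      -- (l,f,f)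
      · exact fun _ h => h.elim
      -- (l,f,t) : lt₂ a u → L21 → lt₁ a u
      · intro h h'
        obtain ⟨hF, hE, hnP12, hP⟩ := hL21.mp h'
        have hd1F : d₁ (Sum.inl a) u ≤ F := (tri12 a).trans (sup_le hF (o₂ _ _ h).1)
        have hd1E : ¬ d₁ (Sum.inl a) u ≤ E := fun hle =>
          hnP12 (hP12.mpr ⟨a, Or.inl (le_of_eq_of_le (sy₁ u (Sum.inl a)) hle), Or.inr h⟩)
        rcases tot₁ _ _ hd1F hd1E with h'' | h''
        · exact h''
        · exact (hnP12 (hP12.mpr ⟨a, Or.inr h'', Or.inr h⟩)).elim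
      -- (l,t,l)
      · exact t₁ _ _ _
      -- (l,t,f) : lt₁ a u → L12 → lt₂ a u
      · intro h h'
        obtain ⟨hF, hE, hOr⟩ := hL12.mp h'
        have hd2F : d₂ (Sum.inl a) u ≤ F := (tri21 a).trans (sup_le hF (o₁ _ _ h).1)
        have hd2E : ¬ d₂ (Sum.inl a) u ≤ E := by
          intro hle
          have hP : P12 := hOr.resolve_right (not_not_intro
            (hP21.mpr ⟨a, Or.inl (le_of_eq_of_le (sy₂ u (Sum.inl a)) hle), Or.inr h⟩))
          exact lemB hP a h (Or.inl (le_of_eq_of_le (sy₂ u (Sum.inl a)) hle))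
        rcases tot₂ _ _ hd2F hd2E with h'' | h''
        · exact h''
        · have hP : P12 := hOr.resolve_right (not_not_intro
            (hP21.mpr ⟨a, Or.inr h'', Or.inr h⟩))
          exact (lemB hP a h (Or.inr h'')).elim
      -- (l,t,t)
      · exact fun _ h => h.elim
      -- (f,l,l)
      · exact fun h h' => t₂ _ _ _ h ((hagree_lt _ _).mp h')
      -- (f,l,f)
      · exact fun h h' => (as₂ _ _ h h').elim
      -- (f,l,t) : lt₂ u b → lt₁ b u → L21
      · intro h h'
        refine hL21.mpr ⟨mkrF b (o₁ _ _ h').1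
          (by have := (o₂ _ _ h).1; rwa [sy₂ u (Sum.inl b)] at this),
          notrE₂ b h h', fun hP => lemA hP b h (Or.inr h'), hP21.mpr ⟨b, Or.inr h, Or.inr h'⟩⟩
      -- (f,f,l)
      · exact fun h _ => h.elim
      -- (f,f,f)
      · exact fun h _ => h.elim
      -- (f,f,t)
      · exact fun h _ => h.elim
      -- (f,t,l) : L21 → lt₁ u c → lt₂ u c
      · intro h h'
        obtain ⟨hF, hE, hnP12, hP⟩ := hL21.mp h
        have hd2F : d₂ u (Sum.inl c) ≤ F := by
          have h2 : d₁ (Sum.inl c) u ≤ F := by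
            have := (o₁ _ _ h').1; rwa [sy₁ u (Sum.inl c)] at this
          have := (tri21 c).trans (sup_le hF h2)
          rwa [sy₂ u (Sum.inl c)]
        have hd2E : ¬ d₂ u (Sum.inl c) ≤ E := fun hle =>
          hnP12 (hP12.mpr ⟨c, Or.inr h', Or.inl (le_of_eq_of_le (sy₂ (Sum.inl c) u) hle)⟩)
        rcases tot₂ _ _ hd2F hd2E with h'' | h''
        · exact h''
        · exact (hnP12 (hP12.mpr ⟨c, Or.inr h', Or.inr h''⟩)).elim
      -- (f,t,f) : L21 → L12 → False
      · intro h h'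
        obtain ⟨_, _, h3, h4⟩ := hL21.mp h
        obtain ⟨_, _, h5⟩ := hL12.mp h'
        exact h5.elim h3 fun hn => hn h4
      -- (f,t,t)
      · exact fun _ h => h.elim
      -- (t,l,l)
      · exact t₁ _ _ _
      -- (t,l,f) : lt₁ u b → lt₂ b u → L12
      · intro h h'
        refine hL12.mpr ⟨mkrF b (by have := (o₁ _ _ h).1; rwa [sy₁ u (Sum.inl b)] at this)
          (o₂ _ _ h').1, notrE₁ b h h', Or.inl (hP12.mpr ⟨b, Or.inr h, Or.inr h'⟩)⟩
      -- (t,l,t)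
      · exact fun h h' => (as₁ _ _ h h').elim
      -- (t,f,l) : L12 → lt₂ u b → lt₁ u b
      · intro h h'
        obtain ⟨hF, hE, hOr⟩ := hL12.mp h
        have hd1F : d₁ u (Sum.inl c) ≤ F := by
          have h2 : d₂ (Sum.inl c) u ≤ F := by
            have := (o₂ _ _ h').1; rwa [sy₂ u (Sum.inl c)] at this
          have := (tri12 c).trans (sup_le hF h2)
          rwa [sy₁ u (Sum.inl c)]
        have hd1E : ¬ d₁ u (Sum.inl c) ≤ E := by
          intro hle
          have hle' : d₁ (Sum.inl c) u ≤ E := le_of_eq_of_le (sy₁ (Sum.inl c) u) hle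
          have hP : P12 := hOr.resolve_right (not_not_intro
            (hP21.mpr ⟨c, Or.inr h', Or.inl hle'⟩))
          exact lemA hP c h' (Or.inl hle')
        rcases tot₁ _ _ hd1F hd1E with h'' | h''
        · exact h''
        · have hP : P12 := hOr.resolve_right (not_not_intro
            (hP21.mpr ⟨c, Or.inr h', Or.inr h''⟩))
          exact (lemA hP c h' (Or.inr h'')).elim
      -- (t,f,f)
      · exact fun _ h => h.elim
      -- (t,f,t) : L12 → L21 → False
      · intro h h'
        obtain ⟨_, _, h3⟩ := hL12.mp h
        obtain ⟨_, _, h4, h5⟩ := hL21.mp h'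
        exact h3.elim h4 fun hn => hn h5
      -- (t,t,l)
      · exact fun h _ => h.elim
      -- (t,t,f)
      · exact fun h _ => h.elim
      -- (t,t,t)
      · exact fun h _ => h.elim
    have congL : ∀ x x' y, AD d₁ d₂ (⊥:Λ) r x x' ≤ E →
        AL lt₁ lt₂ L12 L21 x y → AL lt₁ lt₂ L12 L21 x' y := by
      rintro (a | (_|_)) (a' | (_|_)) (b | (_|_)) <;> simp only [AD, AL]
      -- (l,l,l)
      · exact fun hE h => c₁l _ _ _ hE h
      -- (l,l,f)
      · exact fun hE h => c₂l _ _ _ ((hagree_d a a') ▸ hE) h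
      -- (l,l,t)
      · exact fun hE h => c₁l _ _ _ hE h
      -- (l,f,l)
      · exact fun hE h => c₂l _ _ _ hE ((hagree_lt _ _).mp h)
      -- (l,f,f)
      · exact fun hE h => ((o₂ _ _ h).2 hE).elim
      -- (l,f,t) : d₂ a u ≤ E → lt₁ a u → L21
      · intro hE h
        refine hL21.mpr ⟨mkrF a (o₁ _ _ h).1 (hE.trans hEF'),
          fun hr => (o₂ _ _ ((consL hr a).2.mp h)).2 hE,
          fun hP => lemB hP a h (Or.inl (le_of_eq_of_le (sy₂ u (Sum.inl a)) hE)),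
          hP21.mpr ⟨a, Or.inl (le_of_eq_of_le (sy₂ u (Sum.inl a)) hE), Or.inr h⟩⟩
      -- (l,t,l)
      · exact fun hE h => c₁l _ _ _ hE h
      -- (l,t,f) : d₁ a u ≤ E → lt₂ a u → L12
      · intro hE h
        exact hL12.mpr ⟨mkrF a (hE.trans hEF') (o₂ _ _ h).1,
          fun hr => (o₁ _ _ ((consL hr a).2.mpr h)).2 hE,
          Or.inl (hP12.mpr ⟨a, Or.inl (le_of_eq_of_le (sy₁ u (Sum.inl a)) hE), Or.inr h⟩)⟩
      -- (l,t,t) : d₁ a u ≤ E → lt₁ a u → False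
      · exact fun hE h => ((o₁ _ _ h).2 hE).elim
      -- (f,l,l)
      · exact fun hE h =>
          (hagree_lt _ _).mpr (c₂l _ _ _ (le_of_eq_of_le (sy₂ u (Sum.inl a')) hE) h)
      -- (f,l,f)
      · exact fun _ h => h.elim
      -- (f,l,t) : d₂ a' u ≤ E → L21 → lt₁ a' u
      · intro hE h
        obtain ⟨hF, hrE, hnP12, hP⟩ := hL21.mp h
        have hd1F : d₁ (Sum.inl a') u ≤ F := (tri12 a').trans (sup_le hF (hE.trans hEF'))
        have hd1E : ¬ d₁ (Sum.inl a') u ≤ E := fun hle =>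
          hrE ((hrle a').trans (sup_le hle hE))
        rcases tot₁ _ _ hd1F hd1E with h'' | h''
        · exact h''
        · exact (hnP12 (hP12.mpr ⟨a', Or.inr h'', Or.inl hE⟩)).elim
      -- (f,f,l)
      · exact fun _ h => h
      -- (f,f,f)
      · exact fun _ h => h
      -- (f,f,t)
      · exact fun _ h => h
      -- (f,t,l) : r ≤ E → lt₂ u b → lt₁ u b
      · exact fun hE h => (consL hE b).1.mpr h
      -- (f,t,f)
      · exact fun _ h => h.elim
      -- (f,t,t) : r ≤ E → L21 → False
      · exact fun hE h => ((hL21.mp h).2.1 hE).elim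
      -- (t,l,l)
      · exact fun hE h => c₁l _ _ _ (le_of_eq_of_le (sy₁ u (Sum.inl a')) hE) h
      -- (t,l,f) : d₁ a' u ≤ E → L12 → lt₂ a' u
      · intro hE h
        obtain ⟨hF, hrE, hOr⟩ := hL12.mp h
        have hd2F : d₂ (Sum.inl a') u ≤ F := (tri21 a').trans (sup_le hF (hE.trans hEF'))
        have hd2E : ¬ d₂ (Sum.inl a') u ≤ E := fun hle =>
          hrE ((hrle a').trans (sup_le hE hle))
        rcases tot₂ _ _ hd2F hd2E with h'' | h''
        · exact h''
        · have hP : P12 := hOr.resolve_right (not_not_intro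
            (hP21.mpr ⟨a', Or.inr h'', Or.inl hE⟩))
          exact (lemA hP a' h'' (Or.inl hE)).elim
      -- (t,l,t) : d₁ a' u ≤ E → False → _
      · exact fun _ h => h.elim
      -- (t,f,l) : r ≤ E → lt₁ u b → lt₂ u b
      · exact fun hE h => (consL hE b).1.mp h
      -- (t,f,f) : r ≤ E → L12 → False
      · exact fun hE h => ((hL12.mp h).2.1 hE).elim
      -- (t,f,t)
      · exact fun _ h => h.elim
      -- (t,t,l)
      · exact fun _ h => h
      -- (t,t,f)
      · exact fun _ h => h
      -- (t,t,t)
      · exact fun _ h => h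
    have congR : ∀ x y y', AD d₁ d₂ (⊥:Λ) r y y' ≤ E →
        AL lt₁ lt₂ L12 L21 x y → AL lt₁ lt₂ L12 L21 x y' := by
      rintro (a | (_|_)) (b | (_|_)) (b' | (_|_)) <;> simp only [AD, AL]
      -- (l,l,l)
      · exact fun hE h => c₁r _ _ _ hE h
      -- (l,l,f)
      · exact fun hE h => c₂r _ _ _ hE ((hagree_lt _ _).mp h)
      -- (l,l,t)
      · exact fun hE h => c₁r _ _ _ hE h
      -- (l,f,l)
      · exact fun hE h =>
          (hagree_lt _ _).mpr (c₂r _ _ _ (le_of_eq_of_le (sy₂ u (Sum.inl b')) hE) h)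
      -- (l,f,f)
      · exact fun _ h => h
      -- (l,f,t) : r ≤ E → lt₂ a u → lt₁ a u
      · exact fun hE h => (consL hE a).2.mpr h
      -- (l,t,l)
      · exact fun hE h => c₁r _ _ _ (le_of_eq_of_le (sy₁ u (Sum.inl b')) hE) h
      -- (l,t,f) : r ≤ E → lt₁ a u → lt₂ a u
      · exact fun hE h => (consL hE a).2.mp h
      -- (l,t,t)
      · exact fun _ h => h
      -- (f,l,l)
      · exact fun hE h => c₂r _ _ _ ((hagree_d b b') ▸ hE) h
      -- (f,l,f) : d₂ b u ≤ E → lt₂ u b → False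
      · exact fun hE h => irr₂ u (c₂r _ _ _ hE h)
      -- (f,l,t) : d₁ b u ≤ E → lt₂ u b → L21
      · intro hE h
        refine hL21.mpr ⟨mkrF b (hE.trans hEF')
          (by have := (o₂ _ _ h).1; rwa [sy₂ u (Sum.inl b)] at this),
          fun hr => irr₁ u (c₁r _ _ _ hE ((consL hr b).1.mpr h)),
          fun hP => lemA hP b h (Or.inl hE),
          hP21.mpr ⟨b, Or.inr h, Or.inl hE⟩⟩
      -- (f,f,l)
      · exact fun _ h => h.elim
      -- (f,f,f)
      · exact fun _ h => h
      -- (f,f,t)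
      · exact fun _ h => h.elim
      -- (f,t,l) : d₁ b' u ≤ E → L21 → lt₂ u b'
      · intro hE h
        obtain ⟨hF, hrE, hnP12, hP⟩ := hL21.mp h
        have hd2F : d₂ u (Sum.inl b') ≤ F := by
          have := (tri21 b').trans (sup_le hF (hE.trans hEF'))
          rwa [sy₂ u (Sum.inl b')]
        have hd2E : ¬ d₂ u (Sum.inl b') ≤ E := fun hle =>
          hrE ((hrle b').trans (sup_le hE (le_of_eq_of_le (sy₂ (Sum.inl b') u) hle)))
        rcases tot₂ _ _ hd2F hd2E with h'' | h''
        · exact h''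
        · exact (hnP12 (hP12.mpr
            ⟨b', Or.inl (le_of_eq_of_le (sy₁ u (Sum.inl b')) hE), Or.inr h''⟩)).elim
      -- (f,t,f) : r ≤ E → L21 → False
      · exact fun hE h => ((hL21.mp h).2.1 hE).elim
      -- (f,t,t)
      · exact fun _ h => h
      -- (t,l,l)
      · exact fun hE h => c₁r _ _ _ hE h
      -- (t,l,f) : d₂ b u ≤ E → lt₁ u b → L12
      · intro hE h
        exact hL12.mpr ⟨mkrF b (by have := (o₁ _ _ h).1; rwa [sy₁ u (Sum.inl b)] at this)
          (hE.trans hEF'),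
          fun hr => irr₂ u (c₂r _ _ _ hE ((consL hr b).1.mp h)),
          Or.inl (hP12.mpr ⟨b, Or.inr h, Or.inl hE⟩)⟩
      -- (t,l,t) : d₁ b u ≤ E → lt₁ u b → False
      · exact fun hE h => irr₁ u (c₁r _ _ _ hE h)
      -- (t,f,l) : d₂ b' u ≤ E → L12 → lt₁ u b'
      · intro hE h
        obtain ⟨hF, hrE, hOr⟩ := hL12.mp h
        have hd1F : d₁ u (Sum.inl b') ≤ F := by
          have := (tri12 b').trans (sup_le hF (hE.trans hEF'))
          rwa [sy₁ u (Sum.inl b')]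
        have hd1E : ¬ d₁ u (Sum.inl b') ≤ E := fun hle =>
          hrE ((hrle b').trans (sup_le (le_of_eq_of_le (sy₁ (Sum.inl b') u) hle) hE))
        rcases tot₁ _ _ hd1F hd1E with h'' | h''
        · exact h''
        · have hP : P12 := hOr.resolve_right (not_not_intro (hP21.mpr
            ⟨b', Or.inl (le_of_eq_of_le (sy₂ u (Sum.inl b')) hE), Or.inr h''⟩))
          exact (lemB hP b' h''
            (Or.inl (le_of_eq_of_le (sy₂ u (Sum.inl b')) hE))).elim
      -- (t,f,f)
      · exact fun _ h => h
      -- (t,f,t) : r ≤ E → L12 → False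
      · exact fun hE h => ((hL12.mp h).2.1 hE).elim
      -- (t,t,l)
      · exact fun _ h => h.elim
      -- (t,t,f)
      · exact fun _ h => h.elim
      -- (t,t,t)
      · exact fun _ h => h
    have HU : IsUltra (AD d₁ d₂ (⊥:Λ) r) := ⟨symB, eqB, triB⟩
    have HS : IsSQO E F (AD d₁ d₂ (⊥:Λ) r) (AL lt₁ lt₂ L12 L21) :=
      ⟨oB, transB, asB,
        fun a a' b b' h h' h'' => congR _ _ _ h' (congL _ _ _ h h''), totB⟩
    obtain ⟨n, e⟩ : Σ n : ℕ, ((A₀ ⊕ Bool) ≃ Fin n) := ⟨_, Fintype.equivFin _⟩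
    obtain ⟨hU, hS⟩ := sqo_transport E F e _ _ HU HS
    have em1 : ∀ x y, AD d₁ d₂ (⊥:Λ) r (Sum.map id (fun _ => true) x)
        (Sum.map id (fun _ => true) y) = d₁ x y := by
      rintro (a | ⟨⟩) (b | ⟨⟩) <;> simp only [Sum.map_inl, Sum.map_inr, id_eq, AD] <;>
        first | rfl | exact sy₁ _ _ | exact ((de₁ u u).mpr rfl).symm
    have em2 : ∀ x y, AD d₁ d₂ (⊥:Λ) r (Sum.map id (fun _ => false) x)
        (Sum.map id (fun _ => false) y) = d₂ x y := by
      rintro (a | ⟨⟩) (b | ⟨⟩) <;> simp only [Sum.map_inl, Sum.map_inr, id_eq, AD] <;>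
        first
          | exact hagree_d _ _
          | rfl
          | exact sy₂ _ _
          | exact ((de₂ u u).mpr rfl).symm
    have el1 : ∀ x y, AL lt₁ lt₂ L12 L21 (Sum.map id (fun _ => true) x)
        (Sum.map id (fun _ => true) y) ↔ lt₁ x y := by
      rintro (a | ⟨⟩) (b | ⟨⟩) <;> simp only [Sum.map_inl, Sum.map_inr, id_eq, AL] <;>
        first
          | exact Iff.rfl
          | exact ⟨False.elim, fun h => (irr₁ u h).elim⟩
    have el2 : ∀ x y, AL lt₁ lt₂ L12 L21 (Sum.map id (fun _ => false) x)
        (Sum.map id (fun _ => false) y) ↔ lt₂ x y := by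
      rintro (a | ⟨⟩) (b | ⟨⟩) <;> simp only [Sum.map_inl, Sum.map_inr, id_eq, AL] <;>
        first
          | exact hagree_lt _ _
          | exact Iff.rfl
          | exact ⟨False.elim, fun h => (irr₂ u h).elim⟩
    refine ⟨Fin n, inferInstance,
      fun x y => AD d₁ d₂ (⊥:Λ) r (e.symm x) (e.symm y),
      fun x y => AL lt₁ lt₂ L12 L21 (e.symm x) (e.symm y),
      fun x => e (Sum.map id (fun _ => true) x),
      fun x => e (Sum.map id (fun _ => false) x),
      hU, hS, ?_, ?_, ?_, ?_, fun a => rfl⟩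
    · intro x y; simp only [Equiv.symm_apply_apply]; exact em1 x y
    · intro x y; simp only [Equiv.symm_apply_apply]; exact el1 x y
    · intro x y; simp only [Equiv.symm_apply_apply]; exact em2 x y
    · intro x y; simp only [Equiv.symm_apply_apply]; exact el2 x y
end

section
/- In the setting of amalgamating a subquotient order <_E from E to F over a base A₀ with extension points a₁, a₂ (where E is meet-irreducible in a finite distributive lattice Λ and d(a₁,a₂) is determined by pre-canonical amalgamation): if d(a₁,a₂) ∈ (E, F], then defining a →E b as ∃x ∈ A₀ (a ⪯_E x ⪯_E b) ∧ d(a,b) ≰ E, it cannot be that both a₁ →E a₂ and a₂ →E a₁ hold. -/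
section Aux

variable {Λ A : Type*} [Lattice Λ] [OrderBot Λ] {E F : Λ} {d : A → A → Λ} {lt : A → A → Prop}

lemma aux_ple_trans (hU : IsUltra d) (hS : IsSQO E F d lt) {a b c : A}
    (h1 : d a b ≤ E ∨ lt a b) (h2 : d b c ≤ E ∨ lt b c) : d a c ≤ E ∨ lt a c := by
  obtain ⟨hsym, hbot, htri⟩ := hU
  obtain ⟨h01, htr, hasym, hcomp, htot⟩ := hS
  rcases h1 with h1 | h1 <;> rcases h2 with h2 | h2
  · exact Or.inl ((htri a b c).trans (sup_le h1 h2))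
  · exact Or.inr (hcomp b a c c (hsym a b ▸ h1) (((hbot c c).mpr rfl).trans_le bot_le) h2)
  · exact Or.inr (hcomp a a b c (((hbot a a).mpr rfl).trans_le bot_le) h2 h1)
  · exact Or.inr (htr a b c h1 h2)

lemma aux_ple_antisymm (hU : IsUltra d) (hS : IsSQO E F d lt) {a b : A}
    (h1 : d a b ≤ E ∨ lt a b) (h2 : d b a ≤ E ∨ lt b a) : d a b ≤ E := by
  rcases h1 with h1 | h1
  · exact h1
  rcases h2 with h2 | h2
  · exact (hU.1 a b).symm ▸ h2
  · exact absurd h2 (hS.2.2.1 a b h1)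

lemma aux_lt_of_lt_ple (hU : IsUltra d) (hS : IsSQO E F d lt) {a b c : A}
    (h1 : lt a b) (h2 : d b c ≤ E ∨ lt b c) : lt a c := by
  rcases h2 with h2 | h2
  · exact hS.2.2.2.1 a a b c (((hU.2.1 a a).mpr rfl).trans_le bot_le) h2 h1
  · exact hS.2.1 a b c h1 h2

lemma aux_lt_of_ple_lt (hU : IsUltra d) (hS : IsSQO E F d lt) {a b c : A}
    (h1 : d a b ≤ E ∨ lt a b) (h2 : lt b c) : lt a c := by
  rcases h1 with h1 | h1
  · exact hS.2.2.2.1 b a c c (hU.1 a b ▸ h1) (((hU.2.1 c c).mpr rfl).trans_le bot_le) h2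
  · exact hS.2.1 a b c h1 h2

end Aux

/-- In the amalgamation of a subquotient order `<_E` from a
meet-irreducible `E` to `F` over a base `A₀` with extension points
`a₁ = Sum.inr false`, `a₂ = Sum.inr true`, with `d(a₁,a₂)` given by
pre-canonical amalgamation and lying in the interval `(E,F]`, the relation
`a →E b := (∃ x ∈ A₀, a ⪯_E x ⪯_E b) ∧ d(a,b) ≰ E` (where
`a ⪯_E b ↔ d(a,b) ≤ E ∨ a <_E b`) cannot hold in both directions between
`a₁` and `a₂`. -/
theorem stmt15 {Λ A₀ : Type*} [DistribLattice Λ] [BoundedOrder Λ] [Fintype Λ]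
    [Fintype A₀]
    (E F : Λ) (hEF : E < F)
    (hirr : ∀ x y : Λ, E = x ⊓ y → E = x ∨ E = y)
    (d : (A₀ ⊕ Bool) → (A₀ ⊕ Bool) → Λ)
    (lt : (A₀ ⊕ Bool) → (A₀ ⊕ Bool) → Prop)
    -- the first factor A₁ = A₀ ∪ {a₁} is an ultrametric space with subquotient order
    (h₁ : IsUltra (fun x y : {z : A₀ ⊕ Bool // z ≠ Sum.inr true} => d x.1 y.1) ∧
      IsSQO E F (fun x y : {z : A₀ ⊕ Bool // z ≠ Sum.inr true} => d x.1 y.1)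
        (fun x y => lt x.1 y.1))
    -- the second factor A₂ = A₀ ∪ {a₂} likewise
    (h₂ : IsUltra (fun x y : {z : A₀ ⊕ Bool // z ≠ Sum.inr false} => d x.1 y.1) ∧
      IsSQO E F (fun x y : {z : A₀ ⊕ Bool // z ≠ Sum.inr false} => d x.1 y.1)
        (fun x y => lt x.1 y.1))
    -- pre-canonical amalgamation
    (hpc : d (Sum.inr false) (Sum.inr true) =
      (Finset.univ : Finset A₀).inf
        (fun b => d (Sum.inr false) (Sum.inl b) ⊔ d (Sum.inr true) (Sum.inl b)))
    -- d(a₁,a₂) ∈ (E, F]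
    (hin : E < d (Sum.inr false) (Sum.inr true) ∧
      d (Sum.inr false) (Sum.inr true) ≤ F)
    (ple : (A₀ ⊕ Bool) → (A₀ ⊕ Bool) → Prop)
    (hple : ∀ a b, ple a b ↔ d a b ≤ E ∨ lt a b)
    (arrow : (A₀ ⊕ Bool) → (A₀ ⊕ Bool) → Prop)
    (harrow : ∀ a b, arrow a b ↔
      (∃ x : A₀, ple a (Sum.inl x) ∧ ple (Sum.inl x) b) ∧ ¬ d a b ≤ E) :
    ¬ (arrow (Sum.inr false) (Sum.inr true) ∧
        arrow (Sum.inr true) (Sum.inr false)) := by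
  rintro ⟨h12, h21⟩
  rw [harrow] at h12 h21
  obtain ⟨⟨x₁, hax₁, hx₁b⟩, hd12⟩ := h12
  obtain ⟨⟨x₂, hbx₂, hx₂a⟩, hd21⟩ := h21
  rw [hple] at hax₁ hx₁b hbx₂ hx₂a
  -- subtype embeddings
  set a1 : A₀ ⊕ Bool := Sum.inr false with ha1
  set a2 : A₀ ⊕ Bool := Sum.inr true with ha2
  have ne1 : a1 ≠ Sum.inr true := by simp [ha1]
  have ne2 : a2 ≠ Sum.inr false := by simp [ha2]
  have nx₁1 : (Sum.inl x₁ : A₀ ⊕ Bool) ≠ Sum.inr true := by simp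
  have nx₁2 : (Sum.inl x₁ : A₀ ⊕ Bool) ≠ Sum.inr false := by simp
  have nx₂1 : (Sum.inl x₂ : A₀ ⊕ Bool) ≠ Sum.inr true := by simp
  have nx₂2 : (Sum.inl x₂ : A₀ ⊕ Bool) ≠ Sum.inr false := by simp
  -- x₁ ⪯ x₂ (via a₂, in factor 2) and x₂ ⪯ x₁ (via a₁, in factor 1)
  have q12 : d (Sum.inl x₁) (Sum.inl x₂) ≤ E ∨ lt (Sum.inl x₁) (Sum.inl x₂) :=
    aux_ple_trans h₂.1 h₂.2 (a := ⟨Sum.inl x₁, nx₁2⟩) (b := ⟨a2, ne2⟩)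
      (c := ⟨Sum.inl x₂, nx₂2⟩) hx₁b hbx₂
  have q21 : d (Sum.inl x₂) (Sum.inl x₁) ≤ E ∨ lt (Sum.inl x₂) (Sum.inl x₁) :=
    aux_ple_trans h₁.1 h₁.2 (a := ⟨Sum.inl x₂, nx₂1⟩) (b := ⟨a1, ne1⟩)
      (c := ⟨Sum.inl x₁, nx₁1⟩) hx₂a hax₁
  have hdx : d (Sum.inl x₁) (Sum.inl x₂) ≤ E :=
    aux_ple_antisymm h₁.1 h₁.2 (a := ⟨Sum.inl x₁, nx₁1⟩) (b := ⟨Sum.inl x₂, nx₂1⟩) q12 q21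
  -- from pre-canonical amalgamation: not both d(a₁,x₂) ≤ E and d(a₂,x₂) ≤ E
  have hle : d a1 a2 ≤ d a1 (Sum.inl x₂) ⊔ d a2 (Sum.inl x₂) := by
    rw [hpc]
    exact Finset.inf_le (Finset.mem_univ x₂)
  have hnd : ¬ d a1 a2 ≤ E := fun h => absurd (lt_of_lt_of_le hin.1 h) (lt_irrefl E)
  by_cases hc : d a1 (Sum.inl x₂) ≤ E
  · -- then d a₂ x₂ ≰ E, so a₂ <_E x₂, and x₁ ⪯ a₂ <_E x₂ gives x₁ <_E x₂
    have hnc : ¬ d a2 (Sum.inl x₂) ≤ E := fun h =>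
      hnd (hle.trans (sup_le hc h))
    have hlt : lt a2 (Sum.inl x₂) := hbx₂.resolve_left hnc
    have : lt (Sum.inl x₁) (Sum.inl x₂) :=
      aux_lt_of_ple_lt h₂.1 h₂.2 (a := ⟨Sum.inl x₁, nx₁2⟩) (b := ⟨a2, ne2⟩)
        (c := ⟨Sum.inl x₂, nx₂2⟩) hx₁b hlt
    exact (h₂.2.1 ⟨Sum.inl x₁, nx₁2⟩ ⟨Sum.inl x₂, nx₂2⟩ this).2 hdx
  · -- d a₁ x₂ ≰ E, so x₂ <_E a₁, and x₂ <_E a₁ ⪯ x₁ gives x₂ <_E x₁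
    have hsym12 : d (Sum.inl x₂) a1 = d a1 (Sum.inl x₂) :=
      (h₁.1.1 ⟨Sum.inl x₂, nx₂1⟩ ⟨a1, ne1⟩ :)
    have hnc : ¬ d (Sum.inl x₂) a1 ≤ E := fun h => hc (hsym12 ▸ h)
    have hlt : lt (Sum.inl x₂) a1 := hx₂a.resolve_left hnc
    have : lt (Sum.inl x₂) (Sum.inl x₁) :=
      aux_lt_of_lt_ple h₁.1 h₁.2 (a := ⟨Sum.inl x₂, nx₂1⟩) (b := ⟨a1, ne1⟩)
        (c := ⟨Sum.inl x₁, nx₁1⟩) hlt hax₁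
    have hsymx : d (Sum.inl x₂) (Sum.inl x₁) = d (Sum.inl x₁) (Sum.inl x₂) :=
      (h₁.1.1 ⟨Sum.inl x₂, nx₂1⟩ ⟨Sum.inl x₁, nx₁1⟩ :)
    have hdx' : d (Sum.inl x₂) (Sum.inl x₁) ≤ E := hsymx ▸ hdx
    exact (h₁.2.1 ⟨Sum.inl x₂, nx₂1⟩ ⟨Sum.inl x₁, nx₁1⟩ this).2 hdx'
end

section
/- Let Γ be a homogeneous k-dimensional permutation structure with minimal non-trivial ∅-definable equivalence relation E such that E-classes are <_i-convex for 1 ≤ i ≤ ℓ and <_i-dense for ℓ+1 ≤ i ≤ k, and such that each E-class is generic (modulo agreement of certain orders up to reversal). Then the quotient structure (Γ/E, <₁,…,<_ℓ) is homogeneous: every isomorphism between finite substructures of the quotient extends to an automorphism of the quotient. -/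
/-- Every nonempty finite set has a greatest element with respect to a
transitive trichotomous relation. -/
lemma stmt19_exists_top {α : Type*} (r : α → α → Prop)
    (htr : ∀ a b c, r a b → r b c → r a c)
    (htri : ∀ a b : α, r a b ∨ a = b ∨ r b a)
    (t : Finset α) : t.Nonempty → ∃ m ∈ t, ∀ x ∈ t, x = m ∨ r x m := by
  classical
  induction t using Finset.induction_on with
  | empty => intro ht; simp at ht
  | @insert a s ha ih =>
    intro _
    rcases s.eq_empty_or_nonempty with rfl | hs
    · refine ⟨a, Finset.mem_insert_self a ∅, ?_⟩
      intro x hx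
      left
      simpa using hx
    · obtain ⟨m, hm, hmax⟩ := ih hs
      rcases htri a m with h | h | h
      · refine ⟨m, Finset.mem_insert_of_mem hm, ?_⟩
        intro x hx
        rcases Finset.mem_insert.mp hx with rfl | hx
        · exact Or.inr h
        · exact hmax x hx
      · refine ⟨m, Finset.mem_insert_of_mem hm, ?_⟩
        intro x hx
        rcases Finset.mem_insert.mp hx with rfl | hx
        · exact Or.inl h
        · exact hmax x hx
      · refine ⟨a, Finset.mem_insert_self a s, ?_⟩
        intro x hx
        rcases Finset.mem_insert.mp hx with rfl | hx
        · exact Or.inl rfl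
        · rcases hmax x hx with rfl | hx2
          · exact Or.inr h
          · exact Or.inr (htr x m a hx2 h)

/-- Let `Γ` be a homogeneous `k`-dimensional permutation structure
with minimal non-trivial ∅-definable equivalence relation `E` whose classes are
`o i`-convex for `i < ℓ` and `o i`-dense for `i ≥ ℓ`, each class being generic
(every finite intersection of nonempty open intervals of the class, one in each
order, is nonempty in the class).  Then the quotient `(Γ/E, o 0, …, o (ℓ-1))` is
homogeneous: every finite partial isomorphism of the quotient (stated here on
representatives) extends to an automorphism of the quotient. -/
theorem stmt19 {Γ : Type*} (k ℓ : ℕ) (o : Fin k → Γ → Γ → Prop)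
    (ho : ∀ i, IsStrictTotalOrder Γ (o i))
    -- homogeneity of Γ
    (hom : ∀ (A : Finset Γ) (f : Γ → Γ),
      (∀ a ∈ A, ∀ b ∈ A, ∀ i, o i a b ↔ o i (f a) (f b)) →
      ∃ g : Γ ≃ Γ, (∀ i x y, o i x y ↔ o i (g x) (g y)) ∧ ∀ a ∈ A, g a = f a)
    (E : Γ → Γ → Prop) (hE : Equivalence E)
    -- E is ∅-definable (a union of 2-types), non-trivial and minimal such
    (hdef : ∀ x y x' y' : Γ, x ≠ y → x' ≠ y' →
      (∀ i, o i x y ↔ o i x' y') → (E x y ↔ E x' y'))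
    (hnontriv : (∃ x y, x ≠ y ∧ E x y) ∧ (∃ x y, ¬ E x y))
    (hmin : ∀ E' : Γ → Γ → Prop, Equivalence E' →
      (∀ x y x' y' : Γ, x ≠ y → x' ≠ y' →
        (∀ i, o i x y ↔ o i x' y') → (E' x y ↔ E' x' y')) →
      (∃ x y, x ≠ y ∧ E' x y) → (∀ x y, E' x y → E x y) →
      ∀ x y, E' x y ↔ E x y)
    -- E-classes are convex for the first ℓ orders, dense for the rest
    (hconv : ∀ i : Fin k, (i : ℕ) < ℓ → ∀ a b c, E a c → o i a b → o i b c → E a b)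
    (hdense : ∀ i : Fin k, ℓ ≤ (i : ℕ) → ∀ a b, o i a b → ∀ c, ∃ x, E x c ∧ o i a x ∧ o i x b)
    -- each E-class is generic: finite intersections of nonempty open intervals
    -- of the class are nonempty in the class
    (hgen : ∀ c : Γ, ∀ lo hi : Fin k → Option Γ,
      (∀ i, ∃ x, E x c ∧ (∀ a, lo i = some a → o i a x) ∧ (∀ b, hi i = some b → o i x b)) →
      ∃ x, E x c ∧ ∀ i, (∀ a, lo i = some a → o i a x) ∧ (∀ b, hi i = some b → o i x b)) :
    -- homogeneity of the quotient (Γ/E, o 0, …, o (ℓ-1)), on representatives: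
    ∀ (A : Finset Γ) (f : Γ → Γ),
      (∀ a ∈ A, ∀ b ∈ A, (E a b ↔ E (f a) (f b)) ∧
        (¬ E a b → ∀ i : Fin k, (i : ℕ) < ℓ → (o i a b ↔ o i (f a) (f b)))) →
      ∃ g : Γ → Γ,
        -- g induces an automorphism of the quotient
        (∀ x y, E x y ↔ E (g x) (g y)) ∧
        (∀ y, ∃ x, E (g x) y) ∧
        (∀ x y, ¬ E x y → ∀ i : Fin k, (i : ℕ) < ℓ → (o i x y ↔ o i (g x) (g y))) ∧
        -- extending f modulo E
        (∀ a ∈ A, E (g a) (f a)) := by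
  classical
  intro A f hf
  -- basic order facts
  have otrans : ∀ (i : Fin k) (x y z : Γ), o i x y → o i y z → o i x z :=
    fun i x y z => (ho i).trans x y z
  have otri : ∀ (i : Fin k) (x y : Γ), o i x y ∨ x = y ∨ o i y x :=
    fun i x y => by
      by_contra h; push_neg at h; exact h.2.1 ((ho i).trichotomous x y h.1 h.2.2)
  have oirr : ∀ (i : Fin k) (x : Γ), ¬ o i x x := fun i x => (ho i).irrefl x
  -- order-preserving bijections preserve E
  have Epres : ∀ g : Γ ≃ Γ, (∀ i x y, o i x y ↔ o i (g x) (g y)) →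
      ∀ x y, E x y ↔ E (g x) (g y) := by
    intro g hg x y
    by_cases hxy : x = y
    · subst hxy
      exact iff_of_true (hE.refl x) (hE.refl (g x))
    · exact hdef x y (g x) (g y) hxy (g.injective.ne hxy) (fun i => hg i x y)
  -- no endpoints in any order
  have no_max : ∀ (i : Fin k) (p : Γ), ∃ y, o i p y := by
    intro i p
    obtain ⟨x0, y0, hne, _⟩ := hnontriv.1
    have pair : ∃ u v : Γ, o i u v := by
      rcases otri i x0 y0 with h | h | h
      · exact ⟨x0, y0, h⟩
      · exact absurd h hne
      · exact ⟨y0, x0, h⟩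
    obtain ⟨u, v, huv⟩ := pair
    obtain ⟨g, hg, hgu⟩ := hom {u} (fun _ => p) (by
      intro a ha b hb j
      simp only [Finset.mem_singleton] at ha hb
      subst ha; subst hb
      exact iff_of_false (oirr j _) (oirr j _))
    refine ⟨g v, ?_⟩
    have := (hg i u v).mp huv
    rwa [hgu u (Finset.mem_singleton_self u)] at this
  have no_min : ∀ (i : Fin k) (p : Γ), ∃ y, o i y p := by
    intro i p
    obtain ⟨x0, y0, hne, _⟩ := hnontriv.1
    have pair : ∃ u v : Γ, o i u v := by
      rcases otri i x0 y0 with h | h | h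
      · exact ⟨x0, y0, h⟩
      · exact absurd h hne
      · exact ⟨y0, x0, h⟩
    obtain ⟨u, v, huv⟩ := pair
    obtain ⟨g, hg, hgv⟩ := hom {v} (fun _ => p) (by
      intro a ha b hb j
      simp only [Finset.mem_singleton] at ha hb
      subst ha; subst hb
      exact iff_of_false (oirr j _) (oirr j _))
    refine ⟨g u, ?_⟩
    have := (hg i u v).mp huv
    rwa [hgv v (Finset.mem_singleton_self v)] at this
  -- convexity transfer: orders `i < ℓ` between distinct classes only depend on
  -- the classes
  have cross : ∀ (i : Fin k), (i : ℕ) < ℓ → ∀ x y x' y' : Γ,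
      ¬ E x y → E x x' → E y y' → o i x y → o i x' y' := by
    intro i hil x y x' y' hnE hxx' hyy' hord
    rcases otri i x' y' with h | h | h
    · exact h
    · exfalso
      apply hnE
      rw [h] at hxx'
      exact hE.trans hxx' (hE.symm hyy')
    · exfalso
      rcases otri i y x' with h2 | h2 | h2
      · exact hnE (hconv i hil x y x' hxx' hord h2)
      · apply hnE
        rw [← h2] at hxx'
        exact hxx'
      · have hE1 : E y' x' := hconv i hil y' x' y (hE.symm hyy') h h2
        exact hnE (hE.trans hxx' (hE.trans (hE.symm hE1) (hE.symm hyy')))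
  -- Key step: any subset of A can be lifted to an order-isomorphic copy in the
  -- right E-classes.
  have key : ∀ s : Finset Γ, s ⊆ A → ∃ b : Γ → Γ,
      (∀ x ∈ s, E (b x) (f x)) ∧
      (∀ x ∈ s, ∀ y ∈ s, ∀ i, o i x y ↔ o i (b x) (b y)) := by
    intro s
    induction s using Finset.induction_on with
    | empty => exact fun _ => ⟨id, by simp, by simp⟩
    | @insert a s ha ih =>
      intro hsub
      have hsA : s ⊆ A := (Finset.subset_insert a s).trans hsub
      have haA : a ∈ A := hsub (Finset.mem_insert_self a s)
      obtain ⟨b, hb1, hb2⟩ := ih hsA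
      by_cases hc : ∃ a₀ ∈ s, E a a₀
      · -- the class of `a` is already represented: use homogeneity of Γ
        obtain ⟨a₀, ha₀, hEa₀⟩ := hc
        obtain ⟨σ, hσo, hσe⟩ := hom s b (fun x hx y hy i => hb2 x hx y hy i)
        have hup : ∀ z ∈ s, Function.update b a (σ a) z = b z := by
          intro z hz
          exact Function.update_of_ne (by rintro rfl; exact ha hz) _ _
        refine ⟨Function.update b a (σ a), ?_, ?_⟩
        · intro x hx
          rcases Finset.mem_insert.mp hx with rfl | hx
          · rw [Function.update_self]
            have h1 : E (σ x) (σ a₀) := (Epres σ hσo x a₀).mp hEa₀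
            rw [hσe a₀ ha₀] at h1
            have h2 : E (b a₀) (f a₀) := hb1 a₀ ha₀
            have h3 : E (f a₀) (f x) := (hf a₀ (hsA ha₀) x haA).1.mp (hE.symm hEa₀)
            exact hE.trans h1 (hE.trans h2 h3)
          · rw [hup x hx]
            exact hb1 x hx
        · intro x hx y hy i
          rcases Finset.mem_insert.mp hx with hxa | hx
          · rcases Finset.mem_insert.mp hy with hya | hy
            · rw [hxa, hya, Function.update_self]
              exact iff_of_false (oirr i a) (oirr i _)
            · rw [hxa, Function.update_self, hup y hy, ← hσe y hy]
              exact hσo i a y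
          · rcases Finset.mem_insert.mp hy with hya | hy
            · rw [hya, Function.update_self, hup x hx, ← hσe x hx]
              exact hσo i x a
            · rw [hup x hx, hup y hy]
              exact hb2 x hx y hy i
      · -- new class: use genericity and density
        push_neg at hc
        -- lower endpoints
        have Hp : ∀ i : Fin k, ∃ p : Option Γ,
            (∀ u, p = some u → ∃ m ∈ s, u = b m ∧ o i m a) ∧
            (∀ y ∈ s, o i y a → ∃ u, p = some u ∧ (b y = u ∨ o i (b y) u)) := by
          intro i
          by_cases ht : (s.filter (fun y => o i y a)).Nonempty
          · obtain ⟨m, hm, hmax⟩ := stmt19_exists_top (o i) (otrans i)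
              (otri i) _ ht
            have hm' := Finset.mem_filter.mp hm
            refine ⟨some (b m), ?_, ?_⟩
            · intro u hu
              injection hu with hu
              exact ⟨m, hm'.1, hu.symm, hm'.2⟩
            · intro y hy hya
              refine ⟨b m, rfl, ?_⟩
              rcases hmax y (Finset.mem_filter.mpr ⟨hy, hya⟩) with rfl | h
              · exact Or.inl rfl
              · exact Or.inr ((hb2 y hy m hm'.1 i).mp h)
          · refine ⟨none, fun u hu => (by cases hu), ?_⟩
            intro y hy hya
            exact absurd ⟨y, Finset.mem_filter.mpr ⟨hy, hya⟩⟩ ht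
        -- upper endpoints
        have Hq : ∀ i : Fin k, ∃ q : Option Γ,
            (∀ w, q = some w → ∃ m ∈ s, w = b m ∧ o i a m) ∧
            (∀ y ∈ s, o i a y → ∃ w, q = some w ∧ (b y = w ∨ o i w (b y))) := by
          intro i
          by_cases ht : (s.filter (fun y => o i a y)).Nonempty
          · obtain ⟨m, hm, hmax⟩ := stmt19_exists_top (fun x y => o i y x)
              (fun x y z h1 h2 => otrans i z y x h2 h1)
              (fun x y => by
                rcases otri i x y with h | h | h
                · exact Or.inr (Or.inr h)
                · exact Or.inr (Or.inl h)
                · exact Or.inl h) _ ht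
            have hm' := Finset.mem_filter.mp hm
            refine ⟨some (b m), ?_, ?_⟩
            · intro w hw
              injection hw with hw
              exact ⟨m, hm'.1, hw.symm, hm'.2⟩
            · intro y hy hay
              refine ⟨b m, rfl, ?_⟩
              rcases hmax y (Finset.mem_filter.mpr ⟨hy, hay⟩) with rfl | h
              · exact Or.inl rfl
              · exact Or.inr ((hb2 m hm'.1 y hy i).mp h)
          · refine ⟨none, fun w hw => (by cases hw), ?_⟩
            intro y hy hay
            exact absurd ⟨y, Finset.mem_filter.mpr ⟨hy, hay⟩⟩ ht
        -- combined interval data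
        have H : ∀ i : Fin k, ∃ p q : Option Γ,
            (∃ x, E x (f a) ∧ (∀ u, p = some u → o i u x) ∧
              (∀ w, q = some w → o i x w)) ∧
            (∀ x, E x (f a) → (∀ u, p = some u → o i u x) →
              (∀ w, q = some w → o i x w) →
              ∀ y ∈ s, (o i y a → o i (b y) x) ∧ (o i a y → o i x (b y))) := by
          intro i
          by_cases hil : (i : ℕ) < ℓ
          · refine ⟨none, none,
              ⟨f a, hE.refl _, fun u hu => (by cases hu),
                fun w hw => (by cases hw)⟩, ?_⟩
            intro x hxE _ _ y hy
            have hnEay : ¬ E a y := hc y hy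
            have hnEya : ¬ E y a := fun h => hnEay (hE.symm h)
            have hyA : y ∈ A := hsA hy
            constructor
            · intro hya
              have h1 : o i (f y) (f a) := ((hf y hyA a haA).2 hnEya i hil).mp hya
              have hnE' : ¬ E (f y) (f a) := fun h => hnEya ((hf y hyA a haA).1.mpr h)
              exact cross i hil (f y) (f a) (b y) x hnE' (hE.symm (hb1 y hy))
                (hE.symm hxE) h1
            · intro hay
              have h1 : o i (f a) (f y) := ((hf a haA y hyA).2 hnEay i hil).mp hay
              have hnE' : ¬ E (f a) (f y) := fun h => hnEay ((hf a haA y hyA).1.mpr h)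
              exact cross i hil (f a) (f y) x (b y) hnE' (hE.symm hxE)
                (hE.symm (hb1 y hy)) h1
          · have hle : ℓ ≤ (i : ℕ) := Nat.le_of_not_lt hil
            obtain ⟨p, hp1, hp2⟩ := Hp i
            obtain ⟨q, hq1, hq2⟩ := Hq i
            refine ⟨p, q, ?_, ?_⟩
            · -- nonemptiness of the interval within the class of `f a`
              match p, hp1, hp2 with
              | none, hp1, hp2 =>
                match q, hq1, hq2 with
                | none, hq1, hq2 =>
                  exact ⟨f a, hE.refl _, fun u hu => (by cases hu),
                    fun w hw => (by cases hw)⟩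
                | some w, hq1, hq2 =>
                  obtain ⟨y, hy⟩ := no_min i w
                  obtain ⟨x, hxE, _, hx2⟩ := hdense i hle y w hy (f a)
                  refine ⟨x, hxE, fun u hu => (by cases hu), ?_⟩
                  intro w' hw'
                  injection hw' with hw'
                  exact hw' ▸ hx2
              | some u, hp1, hp2 =>
                match q, hq1, hq2 with
                | none, hq1, hq2 =>
                  obtain ⟨y, hy⟩ := no_max i u
                  obtain ⟨x, hxE, hx1, _⟩ := hdense i hle u y hy (f a)
                  refine ⟨x, hxE, ?_, fun w hw => (by cases hw)⟩
                  intro u' hu'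
                  injection hu' with hu'
                  exact hu' ▸ hx1
                | some w, hq1, hq2 =>
                  obtain ⟨m, hms, hum, hma⟩ := hp1 u rfl
                  obtain ⟨n, hns, hwn, han⟩ := hq1 w rfl
                  have hmn : o i m n := otrans i m a n hma han
                  have hbmn : o i u w := by
                    rw [hum, hwn]
                    exact (hb2 m hms n hns i).mp hmn
                  obtain ⟨x, hxE, hx1, hx2⟩ := hdense i hle u w hbmn (f a)
                  refine ⟨x, hxE, ?_, ?_⟩
                  · intro u' hu'
                    injection hu' with hu'
                    exact hu' ▸ hx1
                  · intro w' hw'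
                    injection hw' with hw'
                    exact hw' ▸ hx2
            · -- any point of the interval has the right position
              intro x _ hclo hchi y hy
              constructor
              · intro hya
                obtain ⟨u, hpu, hcmp⟩ := hp2 y hy hya
                have hux : o i u x := hclo u hpu
                rcases hcmp with h | h
                · exact h ▸ hux
                · exact otrans i (b y) u x h hux
              · intro hay
                obtain ⟨w, hqw, hcmp⟩ := hq2 y hy hay
                have hxw : o i x w := hchi w hqw
                rcases hcmp with h | h
                · exact h ▸ hxw
                · exact otrans i x w (b y) hxw h
        choose lo hi Hne Hspec using H
        obtain ⟨v, hvE, hv⟩ := hgen (f a) lo hi Hne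
        have hup : ∀ z ∈ s, Function.update b a v z = b z := by
          intro z hz
          exact Function.update_of_ne (by rintro rfl; exact ha hz) _ _
        refine ⟨Function.update b a v, ?_, ?_⟩
        · intro x hx
          rcases Finset.mem_insert.mp hx with rfl | hx
          · rw [Function.update_self]; exact hvE
          · rw [hup x hx]; exact hb1 x hx
        · intro x hx y hy i
          rcases Finset.mem_insert.mp hx with hxa | hx
          · rcases Finset.mem_insert.mp hy with hya | hy
            · rw [hxa, hya, Function.update_self]
              exact iff_of_false (oirr i a) (oirr i _)
            · rw [hxa, Function.update_self, hup y hy]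
              constructor
              · intro hay
                exact (Hspec i v hvE (hv i).1 (hv i).2 y hy).2 hay
              · intro hvy
                rcases otri i a y with h | h | h
                · exact h
                · rw [h] at ha
                  exact absurd hy ha
                · have := (Hspec i v hvE (hv i).1 (hv i).2 y hy).1 h
                  exact absurd (otrans i v (b y) v hvy this) (oirr i v)
          · rcases Finset.mem_insert.mp hy with hya | hy
            · rw [hya, Function.update_self, hup x hx]
              constructor
              · intro hxa2
                exact (Hspec i v hvE (hv i).1 (hv i).2 x hx).1 hxa2
              · intro hxv
                rcases otri i x a with h | h | h
                · exact h
                · rw [h] at hx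
                  exact absurd hx ha
                · have := (Hspec i v hvE (hv i).1 (hv i).2 x hx).2 h
                  exact absurd (otrans i v (b x) v this hxv) (oirr i v)
            · rw [hup x hx, hup y hy]
              exact hb2 x hx y hy i
  -- assemble: lift all of A, then extend by homogeneity of Γ
  obtain ⟨b, hb1, hb2⟩ := key A subset_rfl
  obtain ⟨g, hgo, hge⟩ := hom A b hb2
  refine ⟨fun x => g x, fun x y => Epres g hgo x y, ?_, ?_, ?_⟩
  · intro y
    refine ⟨g.symm y, ?_⟩
    show E (g (g.symm y)) y
    rw [Equiv.apply_symm_apply]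
    exact hE.refl y
  · intro x y _ i _
    exact hgo i x y
  · intro a haA
    show E (g a) (f a)
    rw [hge a haA]
    exact hb1 a haA
end
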